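/- arXiv:2604.15263 — 5 statements merged into one kernel-verified Lean document; each statement's English description precedes it below -/
import Mathlib

section
/- Let H₀, W, W′ be Hermitian N×N complex matrices, set H := H₀ + W, H′ := H₀ + W′, and Δ := W − W′. Let β > 0 and suppose there exist ε ≥ 0 and c ≥ 0 such that |⟨ψ, Δψ⟩| ≤ ε ⟨ψ, H₀ψ⟩ + c ‖ψ‖² for all ψ ∈ ℂᴺ. Then |F_β(H) − F_β(H′)| ≤ ε · max( Tr(σ_β(H) H₀), Tr(σ_β(H′) H₀) ) + c. -/
open Matrix

/-- Partition function `Z_β(X) = Tr(e^{−βX})` (a real number, as the real part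
of the trace; for Hermitian `X` the trace is real). -/
noncomputable def partitionZ {N : ℕ} (β : ℝ) (X : Matrix (Fin N) (Fin N) ℂ) : ℝ :=
  (Matrix.trace (NormedSpace.exp ((-β : ℂ) • X))).re

/-- Gibbs state `σ_β(X) = e^{−βX}/Z_β(X)`. -/
noncomputable def gibbs {N : ℕ} (β : ℝ) (X : Matrix (Fin N) (Fin N) ℂ) :
    Matrix (Fin N) (Fin N) ℂ :=
  ((partitionZ β X : ℝ) : ℂ)⁻¹ • NormedSpace.exp ((-β : ℂ) • X)

/-- Free energy `F_β(X) = −β⁻¹ log Z_β(X)`. -/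
noncomputable def freeEnergy {N : ℕ} (β : ℝ) (X : Matrix (Fin N) (Fin N) ℂ) : ℝ :=
  -β⁻¹ * Real.log (partitionZ β X)

namespace FEPB

variable {n : ℕ}

/-- Conjugation inside a quadratic form. -/
lemma quad_conj (U A : Matrix (Fin n) (Fin n) ℂ) (v : Fin n → ℂ) :
    star v ⬝ᵥ ((U * A * star U) *ᵥ v) = star ((star U) *ᵥ v) ⬝ᵥ (A *ᵥ ((star U) *ᵥ v)) := by
  rw [star_mulVec, ← mulVec_mulVec, ← mulVec_mulVec, dotProduct_mulVec]
  simp [star_eq_conjTranspose]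

/-- Spectral form of the matrix exponential of a real multiple of a Hermitian matrix. -/
lemma exp_smul_herm {X : Matrix (Fin n) (Fin n) ℂ} (hX : X.IsHermitian) (t : ℝ) :
    NormedSpace.exp ((t : ℂ) • X)
      = (hX.eigenvectorUnitary : Matrix (Fin n) (Fin n) ℂ)
        * diagonal (fun k => ((Real.exp (t * hX.eigenvalues k) : ℝ) : ℂ))
        * star (hX.eigenvectorUnitary : Matrix (Fin n) (Fin n) ℂ) := by
  set U : Matrix (Fin n) (Fin n) ℂ := (hX.eigenvectorUnitary : Matrix (Fin n) (Fin n) ℂ) with hUdef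
  have hUstar : star U * U = 1 := Unitary.coe_star_mul_self hX.eigenvectorUnitary
  have hUstar' : U * star U = 1 := Unitary.coe_mul_star_self hX.eigenvectorUnitary
  have hU : IsUnit U := ⟨⟨U, star U, hUstar', hUstar⟩, rfl⟩
  have hinv : U⁻¹ = star U := inv_eq_left_inv hUstar
  have h1 : (t : ℂ) • X = U * ((t:ℂ) • diagonal (RCLike.ofReal ∘ hX.eigenvalues)) * U⁻¹ := by
    rw [hinv]
    conv_lhs => rw [hX.spectral_theorem, Unitary.conjStarAlgAut_apply]
    rw [Matrix.mul_smul, Matrix.smul_mul]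
  rw [h1, Matrix.exp_conj _ _ hU, hinv]
  congr 2
  have h2 : (t:ℂ) • diagonal (RCLike.ofReal ∘ hX.eigenvalues)
      = diagonal (fun k => ((t * hX.eigenvalues k : ℝ) : ℂ)) := by
    ext i j
    rcases eq_or_ne i j with h | h <;>
      simp [diagonal, h, Complex.ofReal_mul, Matrix.smul_apply]
  rw [h2, Matrix.exp_diagonal, Pi.exp_def, ← Complex.exp_eq_exp_ℂ]
  simp only [Complex.ofReal_exp]

/-- Real part of a quadratic form of a real diagonal matrix. -/
lemma diag_quad_re (r : Fin n → ℝ) (w : Fin n → ℂ) :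
    (star w ⬝ᵥ (diagonal (fun k => ((r k : ℝ) : ℂ))) *ᵥ w).re = ∑ k, r k * ‖w k‖ ^ 2 := by
  simp only [dotProduct, mulVec_diagonal, Pi.star_apply, Complex.re_sum]
  refine Finset.sum_congr rfl fun k _ => ?_
  have h : (starRingEnd ℂ) (w k) * (((r k : ℝ) : ℂ) * w k)
      = ((r k : ℝ) : ℂ) * ((starRingEnd ℂ) (w k) * w k) := by ring
  rw [RCLike.star_def, h, RCLike.conj_mul]
  simp [← Complex.ofReal_pow]

lemma dot_self_re (v : Fin n → ℂ) : (star v ⬝ᵥ v).re = ∑ i, ‖v i‖ ^ 2 := by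
  simp only [dotProduct, Pi.star_apply, Complex.re_sum]
  refine Finset.sum_congr rfl fun k _ => ?_
  rw [RCLike.star_def, RCLike.conj_mul]
  simp [← Complex.ofReal_pow]

lemma entry_eq_quad (U B : Matrix (Fin n) (Fin n) ℂ) (k : Fin n) :
    (star U * B * U) k k = star (fun i => U i k) ⬝ᵥ B *ᵥ (fun i => U i k) := by
  simp only [mul_apply, dotProduct, mulVec, star_apply, Pi.star_apply,
    Finset.sum_mul, Finset.mul_sum]
  rw [Finset.sum_comm]
  exact Finset.sum_congr rfl fun i _ => Finset.sum_congr rfl fun j _ => by ring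

lemma trace_conj (U D : Matrix (Fin n) (Fin n) ℂ) (h : star U * U = 1) :
    Matrix.trace (U * D * star U) = Matrix.trace D := by
  rw [trace_mul_comm, ← mul_assoc, h, one_mul]

lemma trace_mul_diag_star (U : Matrix (Fin n) (Fin n) ℂ) (d : Fin n → ℂ)
    (B : Matrix (Fin n) (Fin n) ℂ) :
    Matrix.trace (U * diagonal d * star U * B)
      = ∑ k, d k * (star (fun i => U i k) ⬝ᵥ B *ᵥ (fun i => U i k)) := by
  have h1 : U * diagonal d * star U * B = (U * diagonal d) * (star U * B) := by
    rw [mul_assoc]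
  rw [h1, trace_mul_comm, ← mul_assoc, mul_assoc (star U * B)]
  have h2 : Matrix.trace (star U * B * (U * diagonal d))
      = ∑ k, (star U * B * U) k k * d k := by
    rw [← mul_assoc]
    simp [Matrix.trace, Matrix.diag, mul_diagonal]
  rw [← mul_assoc] at h2 ⊢
  rw [h2]
  exact Finset.sum_congr rfl fun k _ => by rw [entry_eq_quad]; ring

section eigen

variable {β : ℝ} {X : Matrix (Fin n) (Fin n) ℂ} (hX : X.IsHermitian)

lemma neg_coe (β : ℝ) : (-β : ℂ) = ((-β : ℝ) : ℂ) := by push_cast; ring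

lemma exp_negβ :
    NormedSpace.exp ((-β : ℂ) • X)
      = (hX.eigenvectorUnitary : Matrix (Fin n) (Fin n) ℂ)
        * diagonal (fun k => ((Real.exp (-β * hX.eigenvalues k) : ℝ) : ℂ))
        * star (hX.eigenvectorUnitary : Matrix (Fin n) (Fin n) ℂ) := by
  rw [neg_coe, exp_smul_herm hX]

lemma col_eq (k : Fin n) :
    (fun i => (hX.eigenvectorUnitary : Matrix (Fin n) (Fin n) ℂ) i k)
      = ⇑(hX.eigenvectorBasis k) :=
  funext fun i => Matrix.IsHermitian.eigenvectorUnitary_apply hX i k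

lemma unit_col (k : Fin n) :
    star ⇑(hX.eigenvectorBasis k) ⬝ᵥ ⇑(hX.eigenvectorBasis k) = 1 := by
  have h1 : ‖hX.eigenvectorBasis k‖ = 1 := hX.eigenvectorBasis.orthonormal.1 k
  have h2 : (inner ℂ (hX.eigenvectorBasis k) (hX.eigenvectorBasis k) : ℂ) = 1 := by
    rw [inner_self_eq_norm_sq_to_K, h1]; norm_num
  rw [EuclideanSpace.inner_eq_star_dotProduct] at h2
  exact (dotProduct_comm _ _).trans h2

lemma Z_eq : partitionZ β X = ∑ k, Real.exp (-β * hX.eigenvalues k) := by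
  rw [partitionZ, exp_negβ hX, trace_conj _ _ (Unitary.coe_star_mul_self hX.eigenvectorUnitary),
    trace_diagonal, Complex.re_sum]
  exact Finset.sum_congr rfl fun k _ => Complex.ofReal_re _

include hX in
lemma Z_pos (hn : 0 < n) : 0 < partitionZ β X := by
  rw [Z_eq hX]
  haveI : Nonempty (Fin n) := Fin.pos_iff_nonempty.mp hn
  exact Finset.sum_pos (fun k _ => Real.exp_pos _) Finset.univ_nonempty

lemma trace_gibbs_re (B : Matrix (Fin n) (Fin n) ℂ) :
    (Matrix.trace (gibbs β X * B)).re
      = (partitionZ β X)⁻¹ * ∑ k, Real.exp (-β * hX.eigenvalues k)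
          * (star ⇑(hX.eigenvectorBasis k) ⬝ᵥ B *ᵥ ⇑(hX.eigenvectorBasis k)).re := by
  rw [gibbs, Matrix.smul_mul, Matrix.trace_smul, exp_negβ hX, trace_mul_diag_star]
  rw [smul_eq_mul, ← Complex.ofReal_inv, Complex.re_ofReal_mul, Complex.re_sum]
  congr 1
  refine Finset.sum_congr rfl fun k _ => ?_
  rw [Complex.re_ofReal_mul]
  rfl

include hX in
lemma trace_eigen (E : Matrix (Fin n) (Fin n) ℂ) :
    Matrix.trace E
      = ∑ k, star ⇑(hX.eigenvectorBasis k) ⬝ᵥ E *ᵥ ⇑(hX.eigenvectorBasis k) := by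
  set U : Matrix (Fin n) (Fin n) ℂ := (hX.eigenvectorUnitary : Matrix (Fin n) (Fin n) ℂ) with hU
  have hUstar' : U * star U = 1 := Unitary.coe_mul_star_self hX.eigenvectorUnitary
  have h1 : Matrix.trace E = Matrix.trace (star U * E * U) := by
    rw [mul_assoc, trace_mul_comm, mul_assoc, hUstar', mul_one]
  rw [h1]
  rw [show Matrix.trace (star U * E * U) = ∑ k, (star U * E * U) k k from rfl]
  exact Finset.sum_congr rfl fun k _ => entry_eq_quad U E k

include hX in
lemma quad_self (k : Fin n) :
    (star ⇑(hX.eigenvectorBasis k) ⬝ᵥ X *ᵥ ⇑(hX.eigenvectorBasis k)).re = hX.eigenvalues k :=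
  (hX.eigenvalues_eq k).symm

end eigen

lemma exp_quad_le {Y : Matrix (Fin n) (Fin n) ℂ} (hY : Y.IsHermitian) (t : ℝ)
    (v : Fin n → ℂ) (hv : star v ⬝ᵥ v = 1) :
    Real.exp (t * (star v ⬝ᵥ Y *ᵥ v).re)
      ≤ (star v ⬝ᵥ (NormedSpace.exp ((t : ℂ) • Y)) *ᵥ v).re := by
  set U : Matrix (Fin n) (Fin n) ℂ := (hY.eigenvectorUnitary : Matrix (Fin n) (Fin n) ℂ) with hU
  set w : Fin n → ℂ := (star U) *ᵥ v with hw
  have hq : ∀ r : Fin n → ℝ,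
      (star v ⬝ᵥ ((U * diagonal (fun k => ((r k : ℝ) : ℂ)) * star U) *ᵥ v)).re
        = ∑ k, r k * ‖w k‖ ^ 2 := fun r => by
    rw [quad_conj]; exact diag_quad_re r w
  have hsum : ∑ k, ‖w k‖ ^ 2 = 1 := by
    have h1 := hq (fun _ => 1)
    have h2 : U * diagonal (fun _ : Fin n => ((1:ℝ):ℂ)) * star U = 1 := by
      have : diagonal (fun _ : Fin n => ((1:ℝ):ℂ)) = 1 := by
        simp [Matrix.diagonal_one]
      rw [this, mul_one]
      exact Unitary.coe_mul_star_self hY.eigenvectorUnitary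
    rw [h2, one_mulVec, hv] at h1
    simpa using h1.symm
  have hY2 : (star v ⬝ᵥ Y *ᵥ v).re = ∑ k, hY.eigenvalues k * ‖w k‖ ^ 2 := by
    conv_lhs => rw [hY.spectral_theorem, Unitary.conjStarAlgAut_apply]
    exact hq hY.eigenvalues
  have hE : (star v ⬝ᵥ (NormedSpace.exp ((t : ℂ) • Y)) *ᵥ v).re
      = ∑ k, Real.exp (t * hY.eigenvalues k) * ‖w k‖ ^ 2 := by
    rw [exp_smul_herm hY]; exact hq _
  rw [hY2, hE]
  have jensen := convexOn_exp.map_sum_le (t := Finset.univ)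
      (w := fun k => ‖w k‖ ^ 2) (p := fun k => t * hY.eigenvalues k)
      (fun k _ => by positivity) hsum (fun k _ => Set.mem_univ _)
  calc Real.exp (t * ∑ k, hY.eigenvalues k * ‖w k‖ ^ 2)
      = Real.exp (∑ k, ‖w k‖ ^ 2 • (t * hY.eigenvalues k)) := by
        congr 1
        rw [Finset.mul_sum]
        exact Finset.sum_congr rfl fun k _ => by simp only [smul_eq_mul]; ring
    _ ≤ ∑ k, ‖w k‖ ^ 2 • Real.exp (t * hY.eigenvalues k) := jensen
    _ = ∑ k, Real.exp (t * hY.eigenvalues k) * ‖w k‖ ^ 2 :=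
        Finset.sum_congr rfl fun k _ => by simp only [smul_eq_mul]; ring



lemma bogoliubov {A B : Matrix (Fin n) (Fin n) ℂ} (hA : A.IsHermitian) (hB : B.IsHermitian)
    (hn : 0 < n) {β : ℝ} (hβ : 0 < β) :
    freeEnergy β (A + B) - freeEnergy β A ≤ (Matrix.trace (gibbs β A * B)).re := by
  set lam := hA.eigenvalues with hlam
  set b : Fin n → ℝ :=
    fun k => (star ⇑(hA.eigenvectorBasis k) ⬝ᵥ B *ᵥ ⇑(hA.eigenvectorBasis k)).re with hb
  set Z := partitionZ β A with hZ
  have hZpos : 0 < Z := Z_pos hA hn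
  set Z' := partitionZ β (A + B) with hZ'
  have hZ'pos : 0 < Z' := Z_pos (hA.add hB) hn
  set S := (Matrix.trace (gibbs β A * B)).re with hS
  have hSsum : S = Z⁻¹ * ∑ k, Real.exp (-β * lam k) * b k := trace_gibbs_re hA B
  have hquad : ∀ k, (star ⇑(hA.eigenvectorBasis k) ⬝ᵥ (A + B) *ᵥ ⇑(hA.eigenvectorBasis k)).re
      = lam k + b k := by
    intro k
    rw [add_mulVec, dotProduct_add, Complex.add_re, quad_self hA k]
  have step1 : ∑ k, Real.exp (-β * (lam k + b k)) ≤ Z' := by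
    have hZ'eq : Z' = ∑ k, (star ⇑(hA.eigenvectorBasis k)
        ⬝ᵥ (NormedSpace.exp ((-β : ℂ) • (A + B))) *ᵥ ⇑(hA.eigenvectorBasis k)).re := by
      rw [hZ', partitionZ, trace_eigen hA, Complex.re_sum]
    rw [hZ'eq]
    refine Finset.sum_le_sum fun k _ => ?_
    have h := exp_quad_le (hA.add hB) (-β) _ (unit_col hA k)
    rw [hquad k] at h
    rw [neg_coe]
    exact h
  set p : Fin n → ℝ := fun k => Real.exp (-β * lam k) / Z with hp
  have hZsum : Z = ∑ k, Real.exp (-β * lam k) := Z_eq hA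
  have hpsum : ∑ k, p k = 1 := by
    rw [hp, ← Finset.sum_div, ← hZsum]
    exact div_self (ne_of_gt hZpos)
  have jensen := convexOn_exp.map_sum_le (t := Finset.univ) (w := p)
      (p := fun k => -β * b k) (fun k _ => by rw [hp]; positivity) hpsum
      (fun k _ => Set.mem_univ _)
  have hlhs : ∑ k, p k • (-β * b k) = -β * S := by
    rw [hSsum, Finset.mul_sum, Finset.mul_sum]
    refine Finset.sum_congr rfl fun k _ => ?_
    rw [smul_eq_mul]
    show Real.exp (-β * lam k) / Z * (-β * b k) = -β * (Z⁻¹ * (Real.exp (-β * lam k) * b k))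
    rw [div_eq_mul_inv]
    ring
  have step2 : Z * Real.exp (-β * S) ≤ ∑ k, Real.exp (-β * (lam k + b k)) := by
    calc Z * Real.exp (-β * S) = Z * Real.exp (∑ k, p k • (-β * b k)) := by rw [hlhs]
      _ ≤ Z * ∑ k, p k • Real.exp (-β * b k) :=
          mul_le_mul_of_nonneg_left jensen hZpos.le
      _ = ∑ k, Real.exp (-β * (lam k + b k)) := by
          rw [Finset.mul_sum]
          refine Finset.sum_congr rfl fun k _ => ?_
          have hZne : Z ≠ 0 := ne_of_gt hZpos
          rw [smul_eq_mul]
          show Z * (Real.exp (-β * lam k) / Z * Real.exp (-β * b k))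
            = Real.exp (-β * (lam k + b k))
          rw [show -β * (lam k + b k) = -β * lam k + -β * b k from by ring, Real.exp_add]
          field_simp
  have step3 : Z * Real.exp (-β * S) ≤ Z' := le_trans step2 step1
  have hlog : Real.log Z + (-β * S) ≤ Real.log Z' := by
    have h := Real.log_le_log (by positivity) step3
    rwa [Real.log_mul (ne_of_gt hZpos) (Real.exp_ne_zero _), Real.log_exp] at h
  rw [freeEnergy, freeEnergy, ← hZ, ← hZ']
  have hβinv : 0 < β⁻¹ := inv_pos.mpr hβ
  have h2 := mul_le_mul_of_nonneg_left hlog hβinv.le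
  have hβne : β ≠ 0 := ne_of_gt hβ
  have h4 : β⁻¹ * (Real.log Z + -β * S) = β⁻¹ * Real.log Z - S := by
    field_simp
    ring
  rw [h4] at h2
  linarith


lemma trace_form_bound {A D H₀ : Matrix (Fin n) (Fin n) ℂ} (hA : A.IsHermitian)
    (hn : 0 < n) {β ε c : ℝ} (hβ : 0 < β) (hε : 0 ≤ ε) (hc : 0 ≤ c)
    (hform : ∀ ψ : Fin n → ℂ, |((star ψ) ⬝ᵥ (D.mulVec ψ)).re|
        ≤ ε * ((star ψ) ⬝ᵥ (H₀.mulVec ψ)).re + c * ∑ i, ‖ψ i‖ ^ 2) :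
    |(Matrix.trace (gibbs β A * D)).re|
      ≤ ε * (Matrix.trace (gibbs β A * H₀)).re + c := by
  set lam := hA.eigenvalues with hlam
  set Z := partitionZ β A with hZ
  have hZpos : 0 < Z := Z_pos hA hn
  have hZinv : (0:ℝ) < Z⁻¹ := inv_pos.mpr hZpos
  set d : Fin n → ℝ :=
    fun k => (star ⇑(hA.eigenvectorBasis k) ⬝ᵥ D *ᵥ ⇑(hA.eigenvectorBasis k)).re with hd
  set h0 : Fin n → ℝ :=
    fun k => (star ⇑(hA.eigenvectorBasis k) ⬝ᵥ H₀ *ᵥ ⇑(hA.eigenvectorBasis k)).re with hh0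
  have hk : ∀ k, |d k| ≤ ε * h0 k + c := by
    intro k
    have h := hform ⇑(hA.eigenvectorBasis k)
    have h2 := dot_self_re ⇑(hA.eigenvectorBasis k)
    rw [unit_col hA k] at h2
    rw [← h2, Complex.one_re, mul_one] at h
    exact h
  rw [trace_gibbs_re hA D, trace_gibbs_re hA H₀]
  set e : Fin n → ℝ := fun k => Real.exp (-β * lam k) with he
  have hZsum : Z = ∑ k, e k := Z_eq hA
  have habs : |Z⁻¹ * ∑ k, e k * d k| ≤ Z⁻¹ * ∑ k, e k * |d k| := by
    rw [abs_mul, abs_of_pos hZinv]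
    refine mul_le_mul_of_nonneg_left ?_ hZinv.le
    refine le_trans (Finset.abs_sum_le_sum_abs _ _) ?_
    refine Finset.sum_le_sum fun k _ => ?_
    rw [abs_mul, abs_of_pos (Real.exp_pos _)]
  refine le_trans habs ?_
  have h2 : ∑ k, e k * |d k| ≤ ∑ k, e k * (ε * h0 k + c) :=
    Finset.sum_le_sum fun k _ => mul_le_mul_of_nonneg_left (hk k) (Real.exp_pos _).le
  have h3 : Z⁻¹ * ∑ k, e k * (ε * h0 k + c) = ε * (Z⁻¹ * ∑ k, e k * h0 k) + c := by
    have h4 : ∑ k, e k * (ε * h0 k + c) = ε * (∑ k, e k * h0 k) + c * Z := by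
      rw [hZsum, Finset.mul_sum, Finset.mul_sum, ← Finset.sum_add_distrib]
      exact Finset.sum_congr rfl fun k _ => by ring
    rw [h4]
    have hZne : Z ≠ 0 := ne_of_gt hZpos
    field_simp
  calc Z⁻¹ * ∑ k, e k * |d k| ≤ Z⁻¹ * ∑ k, e k * (ε * h0 k + c) :=
        mul_le_mul_of_nonneg_left h2 hZinv.le
    _ = ε * (Z⁻¹ * ∑ k, e k * h0 k) + c := h3

end FEPB

open FEPB in
/-- **Free energy perturbation bound under relative form smallness.**
If `|⟨ψ,Δψ⟩| ≤ ε⟨ψ,H₀ψ⟩ + c‖ψ‖²` for all `ψ`, where `Δ = W − W′`, then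
`|F_β(H₀+W) − F_β(H₀+W′)| ≤ ε·max(Tr(σ_β(H)H₀), Tr(σ_β(H′)H₀)) + c`. -/
theorem freeEnergy_perturbation_bound (N : ℕ)
    (H₀ W W' : Matrix (Fin N) (Fin N) ℂ)
    (hH₀ : H₀.IsHermitian) (hW : W.IsHermitian) (hW' : W'.IsHermitian)
    (β : ℝ) (hβ : 0 < β) (ε c : ℝ) (hε : 0 ≤ ε) (hc : 0 ≤ c)
    (hform : ∀ ψ : Fin N → ℂ,
      |((star ψ) ⬝ᵥ ((W - W').mulVec ψ)).re|
        ≤ ε * ((star ψ) ⬝ᵥ (H₀.mulVec ψ)).re + c * ∑ i, ‖ψ i‖ ^ 2) :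
    |freeEnergy β (H₀ + W) - freeEnergy β (H₀ + W')|
      ≤ ε * max (Matrix.trace (gibbs β (H₀ + W) * H₀)).re
            (Matrix.trace (gibbs β (H₀ + W') * H₀)).re
        + c := by
  rcases Nat.eq_zero_or_pos N with hN | hN
  · subst hN
    have htr : ∀ X : Matrix (Fin 0) (Fin 0) ℂ, Matrix.trace X = 0 := fun X => by
      simp [Matrix.trace]
    simp only [freeEnergy, partitionZ, htr, Complex.zero_re, Real.log_zero, mul_zero,
      sub_zero, abs_zero, max_self]
    positivity
  · have hH : (H₀ + W).IsHermitian := hH₀.add hW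
    have hH' : (H₀ + W').IsHermitian := hH₀.add hW'
    have hΔ : (W - W').IsHermitian := hW.sub hW'
    have hΔ' : (W' - W).IsHermitian := hW'.sub hW
    set T := (Matrix.trace (gibbs β (H₀ + W) * H₀)).re with hT
    set T' := (Matrix.trace (gibbs β (H₀ + W') * H₀)).re with hT'
    have hb1 : freeEnergy β (H₀ + W) - freeEnergy β (H₀ + W')
        ≤ (Matrix.trace (gibbs β (H₀ + W') * (W - W'))).re := by
      have h := bogoliubov (A := H₀ + W') (B := W - W') hH' hΔ hN hβ
      rw [show H₀ + W' + (W - W') = H₀ + W from by abel] at h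
      exact h
    have hb2 : freeEnergy β (H₀ + W') - freeEnergy β (H₀ + W)
        ≤ (Matrix.trace (gibbs β (H₀ + W) * (W' - W))).re := by
      have h := bogoliubov (A := H₀ + W) (B := W' - W) hH hΔ' hN hβ
      rw [show H₀ + W + (W' - W) = H₀ + W' from by abel] at h
      exact h
    have hform' : ∀ ψ : Fin N → ℂ,
        |((star ψ) ⬝ᵥ ((W' - W).mulVec ψ)).re|
          ≤ ε * ((star ψ) ⬝ᵥ (H₀.mulVec ψ)).re + c * ∑ i, ‖ψ i‖ ^ 2 := by
      intro ψ
      rw [show W' - W = -(W - W') from (neg_sub W W').symm, neg_mulVec, dotProduct_neg,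
        Complex.neg_re, abs_neg]
      exact hform ψ
    have ha1 : |(Matrix.trace (gibbs β (H₀ + W') * (W - W'))).re| ≤ ε * T' + c :=
      trace_form_bound hH' hN hβ hε hc hform
    have ha2 : |(Matrix.trace (gibbs β (H₀ + W) * (W' - W))).re| ≤ ε * T + c :=
      trace_form_bound hH hN hβ hε hc hform'
    rw [abs_sub_le_iff]
    have hmax1 : ε * T ≤ ε * max T T' := mul_le_mul_of_nonneg_left (le_max_left _ _) hε
    have hmax2 : ε * T' ≤ ε * max T T' := mul_le_mul_of_nonneg_left (le_max_right _ _) hε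
    constructor
    · calc freeEnergy β (H₀ + W) - freeEnergy β (H₀ + W')
          ≤ (Matrix.trace (gibbs β (H₀ + W') * (W - W'))).re := hb1
        _ ≤ ε * T' + c := le_trans (le_abs_self _) ha1
        _ ≤ ε * max T T' + c := add_le_add_left hmax2 _
    · calc freeEnergy β (H₀ + W') - freeEnergy β (H₀ + W)
          ≤ (Matrix.trace (gibbs β (H₀ + W) * (W' - W))).re := hb2
        _ ≤ ε * T + c := le_trans (le_abs_self _) ha2
        _ ≤ ε * max T T' + c := add_le_add_left hmax1 _
end

section
/- Let H₀, W, W′ be Hermitian N×N complex matrices, set H := H₀ + W, H′ := H₀ + W′, and Δ := W − W′. Let β > 0 and suppose there exist ε ≥ 0 and c ≥ 0 such that |⟨ψ, Δψ⟩| ≤ ε ⟨ψ, H₀ψ⟩ + c ‖ψ‖² for all ψ ∈ ℂᴺ. Then both D( σ_β(H) ‖ σ_β(H′) ) and D( σ_β(H′) ‖ σ_β(H) ) are bounded above by β · ( ε Tr(σ_β(H) H₀) + ε Tr(σ_β(H′) H₀) + 2c ). -/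
open Matrix

/-- Matrix logarithm of a Hermitian matrix, via the spectral theorem
(functional calculus with `Real.log` on the eigenvalues); junk value `0`
on non-Hermitian matrices. -/
noncomputable def matLog {N : ℕ} (X : Matrix (Fin N) (Fin N) ℂ) :
    Matrix (Fin N) (Fin N) ℂ :=
  if hX : X.IsHermitian then
    (hX.eigenvectorUnitary : Matrix (Fin N) (Fin N) ℂ) *
      Matrix.diagonal (fun i => (Real.log (hX.eigenvalues i) : ℂ)) *
      star (hX.eigenvectorUnitary : Matrix (Fin N) (Fin N) ℂ)
  else 0

/-- Quantum relative entropy `D(ρ‖σ) = Tr(ρ(log ρ − log σ))`. -/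
noncomputable def relEntropy {N : ℕ} (ρ σ : Matrix (Fin N) (Fin N) ℂ) : ℝ :=
  (Matrix.trace (ρ * (matLog ρ - matLog σ))).re

variable {N : ℕ} {X : Matrix (Fin N) (Fin N) ℂ}

lemma rcCoe (r : ℝ) : (RCLike.ofReal r : ℂ) = (r : ℂ) := rfl

lemma matLog_eq_cfc (hX : X.IsHermitian) : matLog X = hX.cfc Real.log := by
  rw [matLog, dif_pos hX, Matrix.IsHermitian.cfc]
  rfl

lemma conj_diagonal_eq_cfc (hX : X.IsHermitian) (f : ℝ → ℝ) :
    (hX.eigenvectorUnitary : Matrix (Fin N) (Fin N) ℂ) *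
      Matrix.diagonal (fun i => (f (hX.eigenvalues i) : ℂ)) *
      star (hX.eigenvectorUnitary : Matrix (Fin N) (Fin N) ℂ) = hX.cfc f := rfl

lemma exp_eq_cfc (hX : X.IsHermitian) (β : ℝ) :
    NormedSpace.exp ((-β : ℂ) • X) = hX.cfc (fun x => Real.exp (-β * x)) := by
  have hU : ((hX.eigenvectorUnitary : Matrix (Fin N) (Fin N) ℂ))⁻¹
      = star (hX.eigenvectorUnitary : Matrix (Fin N) (Fin N) ℂ) := by
    apply inv_eq_left_inv
    exact Unitary.coe_star_mul_self hX.eigenvectorUnitary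
  have hu : IsUnit ((hX.eigenvectorUnitary : Matrix (Fin N) (Fin N) ℂ)) :=
    (Unitary.toUnits hX.eigenvectorUnitary).isUnit
  have h1 : (-β : ℂ) • X = (hX.eigenvectorUnitary : Matrix (Fin N) (Fin N) ℂ) *
      Matrix.diagonal (fun i => ((-β * hX.eigenvalues i : ℝ) : ℂ)) *
      ((hX.eigenvectorUnitary : Matrix (Fin N) (Fin N) ℂ))⁻¹ := by
    rw [hU]
    conv_lhs => rw [hX.spectral_theorem, Unitary.conjStarAlgAut_apply]
    rw [← smul_mul_assoc, ← mul_smul_comm, ← Matrix.diagonal_smul]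
    have hd : (-(β:ℂ)) • (RCLike.ofReal ∘ hX.eigenvalues : Fin N → ℂ)
        = fun i => ((-β * hX.eigenvalues i : ℝ) : ℂ) := by
      funext i
      simp only [Pi.smul_apply, Function.comp_apply, smul_eq_mul, rcCoe]
      push_cast
      ring
    rw [hd]
  rw [h1, Matrix.exp_conj _ _ hu, Matrix.exp_diagonal, hU, ← conj_diagonal_eq_cfc hX]
  congr 2
  rw [Pi.exp_def]
  ext i
  rw [← Complex.exp_eq_exp_ℂ]
  push_cast
  rfl

lemma contOn_finite (f : ℝ → ℝ) {s : Set ℝ} (hs : s.Finite) : ContinuousOn f s := by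
  have := hs.to_subtype
  rw [continuousOn_iff_continuous_restrict]
  exact continuous_of_discreteTopology

lemma trace_cfc (hX : X.IsHermitian) (f : ℝ → ℝ) :
    Matrix.trace (hX.cfc f) = ∑ i, (f (hX.eigenvalues i) : ℂ) := by
  rw [Matrix.IsHermitian.cfc, Unitary.conjStarAlgAut_apply, Matrix.trace_mul_cycle,
    Unitary.coe_star_mul_self, Matrix.one_mul, Matrix.trace_diagonal]
  rfl

lemma partitionZ_eq (hX : X.IsHermitian) (β : ℝ) :
    partitionZ β X = ∑ i, Real.exp (-β * hX.eigenvalues i) := by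
  rw [partitionZ, exp_eq_cfc hX, trace_cfc]
  rw [Complex.re_sum]
  refine Finset.sum_congr rfl fun i _ => ?_
  exact Complex.ofReal_re _

lemma partitionZ_pos (hX : X.IsHermitian) (β : ℝ) (hN : 0 < N) : 0 < partitionZ β X := by
  rw [partitionZ_eq hX]
  have : Nonempty (Fin N) := Fin.pos_iff_nonempty.mp hN
  exact Finset.sum_pos (fun i _ => Real.exp_pos _) Finset.univ_nonempty

lemma cfc_smul_real (hX : X.IsHermitian) (f : ℝ → ℝ) (z : ℝ) :
    ((z : ℂ)) • hX.cfc f = hX.cfc (fun x => z * f x) := by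
  rw [Matrix.IsHermitian.cfc, Matrix.IsHermitian.cfc, Unitary.conjStarAlgAut_apply,
    Unitary.conjStarAlgAut_apply, ← smul_mul_assoc, ← mul_smul_comm,
    ← Matrix.diagonal_smul]
  have hd : (z : ℂ) • (RCLike.ofReal ∘ f ∘ hX.eigenvalues : Fin N → ℂ)
      = (RCLike.ofReal ∘ (fun x => z * f x) ∘ hX.eigenvalues) := by
    funext i
    simp only [Pi.smul_apply, Function.comp_apply, smul_eq_mul, rcCoe]
    push_cast
    ring
  rw [hd]

lemma gibbs_eq_cfc (hX : X.IsHermitian) (β : ℝ) :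
    gibbs β X = hX.cfc (fun x => Real.exp (-β * x) / partitionZ β X) := by
  rw [gibbs, exp_eq_cfc hX, ← Complex.ofReal_inv, cfc_smul_real hX]
  have : (fun x => (partitionZ β X)⁻¹ * Real.exp (-β * x))
      = (fun x => Real.exp (-β * x) / partitionZ β X) := by
    funext x
    rw [inv_mul_eq_div]
  rw [this]

lemma gibbs_isHermitian (hX : X.IsHermitian) (β : ℝ) : (gibbs β X).IsHermitian := by
  rw [gibbs_eq_cfc hX β, ← hX.cfc_eq]
  have h : IsSelfAdjoint (cfc (fun x => Real.exp (-β * x) / partitionZ β X) X) :=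
    cfc_predicate _ X
  exact h.star_eq

lemma smul_one_conj (hX : X.IsHermitian) (c : ℂ) :
    c • (1 : Matrix (Fin N) (Fin N) ℂ) =
      (hX.eigenvectorUnitary : Matrix (Fin N) (Fin N) ℂ) * (c • 1) *
        star (hX.eigenvectorUnitary : Matrix (Fin N) (Fin N) ℂ) := by
  rw [mul_smul_comm, mul_one, smul_mul_assoc,
    (Matrix.mem_unitaryGroup_iff).mp hX.eigenvectorUnitary.2]

lemma cfc_affine (hX : X.IsHermitian) (β L : ℝ) :
    hX.cfc (fun x => -β * x - L) = (-β : ℂ) • X - ((L : ℝ) : ℂ) • 1 := by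
  rw [Matrix.IsHermitian.cfc, Unitary.conjStarAlgAut_apply]
  conv_rhs => rw [hX.spectral_theorem, Unitary.conjStarAlgAut_apply, ← smul_mul_assoc, ← mul_smul_comm,
    smul_one_conj hX ((L : ℂ))]
  rw [← Matrix.sub_mul, ← Matrix.mul_sub]
  congr 2
  rw [← Matrix.diagonal_one, ← Matrix.diagonal_smul, ← Matrix.diagonal_smul,
    Matrix.diagonal_sub]
  refine (Matrix.diagonal_eq_diagonal_iff).mpr fun i => ?_
  simp only [Pi.sub_apply, Pi.smul_apply, Function.comp_apply, smul_eq_mul, Pi.one_apply,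
    mul_one, rcCoe]
  push_cast
  ring

lemma matLog_gibbs (hX : X.IsHermitian) (β : ℝ) (hN : 0 < N) :
    matLog (gibbs β X) = (-β : ℂ) • X - ((Real.log (partitionZ β X) : ℝ) : ℂ) • 1 := by
  have hZ := partitionZ_pos hX β hN
  have hG : (gibbs β X).IsHermitian := gibbs_isHermitian hX β
  have hfin : (spectrum ℝ X).Finite := Matrix.finite_real_spectrum
  have hXsa : IsSelfAdjoint X := hX
  have h1 : matLog (gibbs β X)
      = cfc (Real.log ∘ (fun x => Real.exp (-β * x) / partitionZ β X)) X := by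
    rw [matLog_eq_cfc hG, ← hG.cfc_eq, gibbs_eq_cfc hX β, ← hX.cfc_eq]
    exact (cfc_comp Real.log _ X hXsa (contOn_finite _ (hfin.image _))
      (contOn_finite _ hfin)).symm
  have h2 : Real.log ∘ (fun x => Real.exp (-β * x) / partitionZ β X)
      = fun x => -β * x - Real.log (partitionZ β X) := by
    funext x
    simp [Function.comp_apply, Real.log_div (Real.exp_ne_zero _) hZ.ne', Real.log_exp]
  rw [h1, h2, hX.cfc_eq, cfc_affine hX]

lemma matLog_gibbs_cfc (hX : X.IsHermitian) (β : ℝ) :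
    matLog (gibbs β X)
      = hX.cfc (Real.log ∘ fun x => Real.exp (-β * x) / partitionZ β X) := by
  have hG : (gibbs β X).IsHermitian := gibbs_isHermitian hX β
  have hfin : (spectrum ℝ X).Finite := Matrix.finite_real_spectrum
  have hXsa : IsSelfAdjoint X := hX
  rw [matLog_eq_cfc hG, ← hG.cfc_eq, gibbs_eq_cfc hX β, ← hX.cfc_eq, ← cfc_comp Real.log _ X hXsa
    (contOn_finite _ (hfin.image _)) (contOn_finite _ hfin), hX.cfc_eq]

lemma trace_gibbs_eq_one (hX : X.IsHermitian) (β : ℝ) (hN : 0 < N) :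
    Matrix.trace (gibbs β X) = 1 := by
  have hZ := partitionZ_pos hX β hN
  rw [gibbs_eq_cfc hX β, trace_cfc]
  rw [← Complex.ofReal_sum]
  rw [← Finset.sum_div, ← partitionZ_eq hX β, div_self hZ.ne']
  norm_num

lemma key_trace (U V : Matrix.unitaryGroup (Fin N) ℂ) (a b : Fin N → ℝ) :
    (Matrix.trace ((U : Matrix (Fin N) (Fin N) ℂ) * Matrix.diagonal (fun i => (a i : ℂ))
        * star (U : Matrix (Fin N) (Fin N) ℂ)
      * ((V : Matrix (Fin N) (Fin N) ℂ) * Matrix.diagonal (fun j => (b j : ℂ))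
        * star (V : Matrix (Fin N) (Fin N) ℂ)))).re
    = ∑ i, ∑ j, a i * b j
        * ‖(star (U : Matrix (Fin N) (Fin N) ℂ) * (V : Matrix (Fin N) (Fin N) ℂ)) i j‖ ^ 2 := by
  set U' : Matrix (Fin N) (Fin N) ℂ := (U : Matrix (Fin N) (Fin N) ℂ)
  set V' : Matrix (Fin N) (Fin N) ℂ := (V : Matrix (Fin N) (Fin N) ℂ)
  set B : Matrix (Fin N) (Fin N) ℂ := star U' * V' with hB
  set Da : Matrix (Fin N) (Fin N) ℂ := Matrix.diagonal (fun i => (a i : ℂ))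
  set Db : Matrix (Fin N) (Fin N) ℂ := Matrix.diagonal (fun j => (b j : ℂ))
  have h1 : U' * Da * star U' * (V' * Db * star V')
      = U' * (Da * B * Db * (star V')) := by
    rw [hB]
    simp only [Matrix.mul_assoc]
  have h2 : Matrix.trace (U' * Da * star U' * (V' * Db * star V'))
      = Matrix.trace (Da * B * Db * (star V' * U')) := by
    rw [h1, Matrix.trace_mul_comm]
    simp only [Matrix.mul_assoc]
  have h3 : star V' * U' = star B := by
    rw [hB, StarMul.star_mul, star_star]
  rw [h2, h3]
  rw [Matrix.trace]
  rw [Complex.re_sum]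
  refine Finset.sum_congr rfl fun i _ => ?_
  have h4 : (Da * B * Db * star B).diag i = ∑ j, (a i : ℂ) * B i j * (b j : ℂ)
      * (starRingEnd ℂ) (B i j) := by
    rw [Matrix.diag_apply, Matrix.mul_apply]
    refine Finset.sum_congr rfl fun j _ => ?_
    rw [Matrix.mul_diagonal, Matrix.diagonal_mul]
    simp [Matrix.star_apply]
  rw [h4, Complex.re_sum]
  refine Finset.sum_congr rfl fun j _ => ?_
  have : (a i : ℂ) * B i j * (b j : ℂ) * (starRingEnd ℂ) (B i j)
      = ((a i * b j : ℝ) : ℂ) * (B i j * (starRingEnd ℂ) (B i j)) := by push_cast; ring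
  rw [this, Complex.mul_conj, ← Complex.ofReal_mul, Complex.ofReal_re,
    Complex.normSq_eq_norm_sq]

lemma log_ineq {p q : ℝ} (hp : 0 < p) (hq : 0 < q) :
    p - q ≤ p * (Real.log p - Real.log q) := by
  have h := Real.log_le_sub_one_of_pos (div_pos hq hp)
  rw [Real.log_div hq.ne' hp.ne'] at h
  have h2 := mul_le_mul_of_nonneg_left h hp.le
  have h3 : p * (q / p - 1) = q - p := by field_simp
  nlinarith

lemma unitary_row_sum (B : Matrix (Fin N) (Fin N) ℂ) (hBB : B * star B = 1) (i : Fin N) :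
    ∑ j, ‖B i j‖ ^ 2 = 1 := by
  have h : (B * star B) i i = (1 : Matrix (Fin N) (Fin N) ℂ) i i := by rw [hBB]
  rw [Matrix.mul_apply, Matrix.one_apply_eq] at h
  have h2 : ∀ j : Fin N, B i j * (star B) j i = ((‖B i j‖ ^ 2 : ℝ) : ℂ) := by
    intro j
    rw [Matrix.star_apply]
    have hc : (star (B i j)) = (starRingEnd ℂ) (B i j) := rfl
    rw [hc, Complex.mul_conj, Complex.normSq_eq_norm_sq]
  rw [Finset.sum_congr rfl (fun j _ => h2 j), ← Complex.ofReal_sum] at h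
  exact_mod_cast h

lemma sum_p_eq_one (hX : X.IsHermitian) (β : ℝ) (hN : 0 < N) :
    ∑ i, Real.exp (-β * hX.eigenvalues i) / partitionZ β X = 1 := by
  rw [← Finset.sum_div, ← partitionZ_eq hX β, div_self (partitionZ_pos hX β hN).ne']

lemma klein {Y : Matrix (Fin N) (Fin N) ℂ} (hX : X.IsHermitian) (hY : Y.IsHermitian)
    (β : ℝ) (hN : 0 < N) : 0 ≤ relEntropy (gibbs β X) (gibbs β Y) := by
  set p : Fin N → ℝ := fun i => Real.exp (-β * hX.eigenvalues i) / partitionZ β X with hp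
  set q : Fin N → ℝ := fun j => Real.exp (-β * hY.eigenvalues j) / partitionZ β Y with hq
  have hppos : ∀ i, 0 < p i := fun i =>
    div_pos (Real.exp_pos _) (partitionZ_pos hX β hN)
  have hqpos : ∀ j, 0 < q j := fun j =>
    div_pos (Real.exp_pos _) (partitionZ_pos hY β hN)
  have hpsum : ∑ i, p i = 1 := sum_p_eq_one hX β hN
  have hqsum : ∑ j, q j = 1 := sum_p_eq_one hY β hN
  set U := hX.eigenvectorUnitary with hU
  set V := hY.eigenvectorUnitary with hV
  have hρ : gibbs β X = (U : Matrix (Fin N) (Fin N) ℂ) * Matrix.diagonal (fun i => (p i : ℂ))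
      * star (U : Matrix (Fin N) (Fin N) ℂ) := by
    rw [gibbs_eq_cfc hX β]; rfl
  have hlogρ : matLog (gibbs β X) = (U : Matrix (Fin N) (Fin N) ℂ)
      * Matrix.diagonal (fun i => ((Real.log (p i) : ℝ) : ℂ))
      * star (U : Matrix (Fin N) (Fin N) ℂ) := by
    rw [matLog_gibbs_cfc hX β]; rfl
  have hlogσ : matLog (gibbs β Y) = (V : Matrix (Fin N) (Fin N) ℂ)
      * Matrix.diagonal (fun j => ((Real.log (q j) : ℝ) : ℂ))
      * star (V : Matrix (Fin N) (Fin N) ℂ) := by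
    rw [matLog_gibbs_cfc hY β]; rfl
  rw [relEntropy, Matrix.mul_sub, Matrix.trace_sub, Complex.sub_re]
  nth_rewrite 1 [hρ, hlogρ]
  nth_rewrite 1 [hρ, hlogσ]
  rw [key_trace U U p (fun i => Real.log (p i)), key_trace U V p (fun j => Real.log (q j))]
  -- identity matrix simplification for the first sum
  have hUU : star (U : Matrix (Fin N) (Fin N) ℂ) * (U : Matrix (Fin N) (Fin N) ℂ) = 1 :=
    Unitary.coe_star_mul_self U
  set B : Matrix (Fin N) (Fin N) ℂ :=
    star (U : Matrix (Fin N) (Fin N) ℂ) * (V : Matrix (Fin N) (Fin N) ℂ) with hBdef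
  set w : Fin N → Fin N → ℝ := fun i j => ‖B i j‖ ^ 2 with hw
  have hwnn : ∀ i j, 0 ≤ w i j := fun i j => sq_nonneg _
  have hBB : B * star B = 1 := by
    rw [hBdef, StarMul.star_mul, star_star, Matrix.mul_assoc, ← Matrix.mul_assoc
      (V : Matrix (Fin N) (Fin N) ℂ), Matrix.mem_unitaryGroup_iff.mp V.2, Matrix.one_mul,
      Unitary.coe_star_mul_self U]
  have hsBB : star B * B = 1 := by
    rw [hBdef, StarMul.star_mul, star_star, Matrix.mul_assoc, ← Matrix.mul_assoc
      (U : Matrix (Fin N) (Fin N) ℂ), Matrix.mem_unitaryGroup_iff.mp U.2, Matrix.one_mul,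
      Unitary.coe_star_mul_self V]
  have hrow : ∀ i, ∑ j, w i j = 1 := fun i => unitary_row_sum B hBB i
  have hcol : ∀ j, ∑ i, w i j = 1 := by
    intro j
    have h := unitary_row_sum (star B) (by rwa [star_star]) j
    calc ∑ i, w i j = ∑ i, ‖(star B) j i‖ ^ 2 := by
          refine Finset.sum_congr rfl fun i _ => ?_
          rw [Matrix.star_apply, norm_star]
      _ = 1 := h
  have hfirst : ∑ i, ∑ j, p i * Real.log (p j)
      * ‖(star (U : Matrix (Fin N) (Fin N) ℂ) * (U : Matrix (Fin N) (Fin N) ℂ)) i j‖ ^ 2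
      = ∑ i, p i * Real.log (p i) := by
    refine Finset.sum_congr rfl fun i _ => ?_
    rw [hUU]
    rw [Finset.sum_eq_single i]
    · rw [Matrix.one_apply_eq]
      norm_num
    · intro j _ hj
      rw [Matrix.one_apply_ne (Ne.symm hj)]
      norm_num
    · intro h
      exact absurd (Finset.mem_univ i) h
  rw [hfirst]
  have hsecond : ∑ i, ∑ j, p i * Real.log (q j)
      * ‖(star (U : Matrix (Fin N) (Fin N) ℂ) * (V : Matrix (Fin N) (Fin N) ℂ)) i j‖ ^ 2
      = ∑ i, ∑ j, w i j * (p i * Real.log (q j)) := by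
    refine Finset.sum_congr rfl fun i _ => Finset.sum_congr rfl fun j _ => ?_
    rw [← hBdef]
    ring
  rw [hsecond]
  have hfirst2 : ∑ i, p i * Real.log (p i)
      = ∑ i, ∑ j, w i j * (p i * Real.log (p i)) := by
    refine Finset.sum_congr rfl fun i _ => ?_
    rw [← Finset.sum_mul, hrow i, one_mul]
  rw [hfirst2, ← Finset.sum_sub_distrib]
  have hterm : ∀ i, ∑ j, w i j * (p i * Real.log (p i))
      - ∑ j, w i j * (p i * Real.log (q j))
      = ∑ j, w i j * (p i * (Real.log (p i) - Real.log (q j))) := by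
    intro i
    rw [← Finset.sum_sub_distrib]
    refine Finset.sum_congr rfl fun j _ => by ring
  rw [Finset.sum_congr rfl fun i _ => hterm i]
  have hge : ∑ i, ∑ j, w i j * (p i - q j)
      ≤ ∑ i, ∑ j, w i j * (p i * (Real.log (p i) - Real.log (q j))) := by
    refine Finset.sum_le_sum fun i _ => Finset.sum_le_sum fun j _ => ?_
    exact mul_le_mul_of_nonneg_left (log_ineq (hppos i) (hqpos j)) (hwnn i j)
  have hzero : ∑ i, ∑ j, w i j * (p i - q j) = 0 := by
    have h1 : ∑ i, ∑ j, w i j * p i = 1 := by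
      calc ∑ i, ∑ j, w i j * p i = ∑ i, (∑ j, w i j) * p i := by
            refine Finset.sum_congr rfl fun i _ => ?_
            rw [Finset.sum_mul]
        _ = ∑ i, p i := by
            refine Finset.sum_congr rfl fun i _ => by rw [hrow i, one_mul]
        _ = 1 := hpsum
    have h2 : ∑ i, ∑ j, w i j * q j = 1 := by
      rw [Finset.sum_comm]
      calc ∑ j, ∑ i, w i j * q j = ∑ j, (∑ i, w i j) * q j := by
            refine Finset.sum_congr rfl fun j _ => ?_
            rw [Finset.sum_mul]
        _ = ∑ j, q j := by
            refine Finset.sum_congr rfl fun j _ => by rw [hcol j, one_mul]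
        _ = 1 := hqsum
    have : ∑ i, ∑ j, w i j * (p i - q j)
        = ∑ i, ∑ j, w i j * p i - ∑ i, ∑ j, w i j * q j := by
      rw [← Finset.sum_sub_distrib]
      refine Finset.sum_congr rfl fun i _ => ?_
      rw [← Finset.sum_sub_distrib]
      refine Finset.sum_congr rfl fun j _ => by ring
    rw [this, h1, h2, sub_self]
  linarith

lemma relEntropy_gibbs_eq {Y : Matrix (Fin N) (Fin N) ℂ} (hX : X.IsHermitian)
    (hY : Y.IsHermitian) (β : ℝ) (hN : 0 < N) :
    relEntropy (gibbs β X) (gibbs β Y)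
      = -β * (Matrix.trace (gibbs β X * (X - Y))).re
        + (Real.log (partitionZ β Y) - Real.log (partitionZ β X)) := by
  rw [relEntropy, matLog_gibbs hX β hN, matLog_gibbs hY β hN]
  have hdiff : ((-β : ℂ) • X - ((Real.log (partitionZ β X) : ℝ) : ℂ) • 1)
      - ((-β : ℂ) • Y - ((Real.log (partitionZ β Y) : ℝ) : ℂ) • 1)
      = (-β : ℂ) • (X - Y)
        + ((Real.log (partitionZ β Y) - Real.log (partitionZ β X) : ℝ) : ℂ) • 1 := by
    push_cast
    module
  rw [hdiff, Matrix.mul_add, Matrix.trace_add, mul_smul_comm, mul_smul_comm,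
    Matrix.trace_smul, Matrix.trace_smul, Matrix.mul_one, trace_gibbs_eq_one hX β hN,
    smul_eq_mul, smul_eq_mul, mul_one, Complex.add_re]
  have h1 : ((-β : ℂ) * Matrix.trace (gibbs β X * (X - Y))).re
      = -β * (Matrix.trace (gibbs β X * (X - Y))).re := by
    rw [show ((-β : ℂ)) = ((-β : ℝ) : ℂ) by push_cast; ring, Complex.re_ofReal_mul]
  rw [h1, Complex.ofReal_re]

lemma trace_gibbs_mul (hX : X.IsHermitian) (β : ℝ) (A : Matrix (Fin N) (Fin N) ℂ) :
    Matrix.trace (gibbs β X * A)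
      = ∑ i, ((Real.exp (-β * hX.eigenvalues i) / partitionZ β X : ℝ) : ℂ) *
          ((star (fun k => (hX.eigenvectorUnitary : Matrix (Fin N) (Fin N) ℂ) k i)) ⬝ᵥ
            (A.mulVec (fun k => (hX.eigenvectorUnitary : Matrix (Fin N) (Fin N) ℂ) k i))) := by
  set U : Matrix (Fin N) (Fin N) ℂ := (hX.eigenvectorUnitary : Matrix (Fin N) (Fin N) ℂ)
    with hUdef
  set p : Fin N → ℝ := fun i => Real.exp (-β * hX.eigenvalues i) / partitionZ β X with hp
  have hρ : gibbs β X = U * Matrix.diagonal (fun i => (p i : ℂ)) * star U := by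
    rw [gibbs_eq_cfc hX β]; rfl
  rw [hρ]
  have h2 : Matrix.trace (U * Matrix.diagonal (fun i => (p i : ℂ)) * star U * A)
      = Matrix.trace (Matrix.diagonal (fun i => (p i : ℂ)) * (star U * A * U)) := by
    rw [show U * Matrix.diagonal (fun i => (p i : ℂ)) * star U * A
      = U * (Matrix.diagonal (fun i => (p i : ℂ)) * (star U * A)) by
        simp only [Matrix.mul_assoc], Matrix.trace_mul_comm]
    simp only [Matrix.mul_assoc]
  rw [h2, Matrix.trace]
  refine Finset.sum_congr rfl fun i _ => ?_
  rw [Matrix.diag_apply, Matrix.diagonal_mul]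
  congr 1
  rw [Matrix.mul_apply, dotProduct]
  rw [show (A.mulVec fun k => U k i) = fun k => ∑ l, A k l * U l i from rfl]
  have hstep : ∀ l : Fin N, (star U * A) i l * U l i
      = ∑ k, (star fun k => U k i) k * A k l * U l i := by
    intro l
    rw [Matrix.mul_apply, Finset.sum_mul]
    refine Finset.sum_congr rfl fun k _ => ?_
    rw [Matrix.star_apply]
    rfl
  rw [Finset.sum_congr rfl fun l _ => hstep l, Finset.sum_comm]
  refine Finset.sum_congr rfl fun k _ => ?_
  rw [Finset.mul_sum]
  refine Finset.sum_congr rfl fun l _ => by ring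

lemma re_trace_gibbs_mul (hX : X.IsHermitian) (β : ℝ) (A : Matrix (Fin N) (Fin N) ℂ) :
    (Matrix.trace (gibbs β X * A)).re
      = ∑ i, (Real.exp (-β * hX.eigenvalues i) / partitionZ β X) *
          ((star (fun k => (hX.eigenvectorUnitary : Matrix (Fin N) (Fin N) ℂ) k i)) ⬝ᵥ
            (A.mulVec (fun k => (hX.eigenvectorUnitary : Matrix (Fin N) (Fin N) ℂ) k i))).re := by
  rw [trace_gibbs_mul hX β A, Complex.re_sum]
  exact Finset.sum_congr rfl fun i _ => Complex.re_ofReal_mul _ _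

lemma col_norm_one (hX : X.IsHermitian) (i : Fin N) :
    ∑ k, ‖(hX.eigenvectorUnitary : Matrix (Fin N) (Fin N) ℂ) k i‖ ^ 2 = 1 := by
  set U : Matrix (Fin N) (Fin N) ℂ := (hX.eigenvectorUnitary : Matrix (Fin N) (Fin N) ℂ)
  have h1 : star U * star (star U) = 1 := by
    rw [star_star]
    exact Unitary.coe_star_mul_self hX.eigenvectorUnitary
  have h := unitary_row_sum (star U) h1 i
  calc ∑ k, ‖U k i‖ ^ 2 = ∑ k, ‖(star U) i k‖ ^ 2 := by
        refine Finset.sum_congr rfl fun k _ => ?_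
        rw [Matrix.star_apply, norm_star]
    _ = 1 := h

lemma form_bound (hX : X.IsHermitian) (β : ℝ) (hN : 0 < N) {ε c : ℝ} (hε : 0 ≤ ε)
    (Δ H₀ : Matrix (Fin N) (Fin N) ℂ)
    (hform : ∀ ψ : Fin N → ℂ,
      |((star ψ) ⬝ᵥ (Δ.mulVec ψ)).re|
        ≤ ε * ((star ψ) ⬝ᵥ (H₀.mulVec ψ)).re + c * ∑ i, ‖ψ i‖ ^ 2) :
    |(Matrix.trace (gibbs β X * Δ)).re| ≤ ε * (Matrix.trace (gibbs β X * H₀)).re + c := by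
  set U : Matrix (Fin N) (Fin N) ℂ := (hX.eigenvectorUnitary : Matrix (Fin N) (Fin N) ℂ)
  set p : Fin N → ℝ := fun i => Real.exp (-β * hX.eigenvalues i) / partitionZ β X with hp
  have hppos : ∀ i, 0 < p i := fun i => div_pos (Real.exp_pos _) (partitionZ_pos hX β hN)
  have hpsum : ∑ i, p i = 1 := sum_p_eq_one hX β hN
  set u : Fin N → Fin N → ℂ := fun i k => U k i with hu
  have hΔ : (Matrix.trace (gibbs β X * Δ)).re
      = ∑ i, p i * ((star (u i)) ⬝ᵥ (Δ.mulVec (u i))).re := re_trace_gibbs_mul hX β Δ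
  have hH : (Matrix.trace (gibbs β X * H₀)).re
      = ∑ i, p i * ((star (u i)) ⬝ᵥ (H₀.mulVec (u i))).re := re_trace_gibbs_mul hX β H₀
  rw [hΔ, hH]
  have hbound : ∀ i, |p i * ((star (u i)) ⬝ᵥ (Δ.mulVec (u i))).re|
      ≤ p i * (ε * ((star (u i)) ⬝ᵥ (H₀.mulVec (u i))).re + c) := by
    intro i
    rw [abs_mul, abs_of_nonneg (hppos i).le]
    refine mul_le_mul_of_nonneg_left ?_ (hppos i).le
    have h := hform (u i)
    rwa [col_norm_one hX i, mul_one] at h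
  calc |∑ i, p i * ((star (u i)) ⬝ᵥ (Δ.mulVec (u i))).re|
      ≤ ∑ i, |p i * ((star (u i)) ⬝ᵥ (Δ.mulVec (u i))).re| :=
        Finset.abs_sum_le_sum_abs _ _
    _ ≤ ∑ i, p i * (ε * ((star (u i)) ⬝ᵥ (H₀.mulVec (u i))).re + c) :=
        Finset.sum_le_sum fun i _ => hbound i
    _ = ε * ∑ i, p i * ((star (u i)) ⬝ᵥ (H₀.mulVec (u i))).re + c := by
        rw [Finset.sum_congr rfl fun i _ =>
          (show p i * (ε * ((star (u i)) ⬝ᵥ (H₀.mulVec (u i))).re + c)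
            = ε * (p i * ((star (u i)) ⬝ᵥ (H₀.mulVec (u i))).re) + c * p i by ring),
          Finset.sum_add_distrib, ← Finset.mul_sum, ← Finset.mul_sum, hpsum, mul_one]

/-- **Relative entropy bound for Gibbs states under relative form perturbations.**
If `|⟨ψ,Δψ⟩| ≤ ε⟨ψ,H₀ψ⟩ + c‖ψ‖²` for all `ψ`, where `Δ = W − W′`, then both
`D(σ_β(H)‖σ_β(H′))` and `D(σ_β(H′)‖σ_β(H))` are at most
`β(ε Tr(σ_β(H)H₀) + ε Tr(σ_β(H′)H₀) + 2c)`. -/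
theorem relEntropy_gibbs_perturbation_bound (N : ℕ)
    (H₀ W W' : Matrix (Fin N) (Fin N) ℂ)
    (hH₀ : H₀.IsHermitian) (hW : W.IsHermitian) (hW' : W'.IsHermitian)
    (β : ℝ) (hβ : 0 < β) (ε c : ℝ) (hε : 0 ≤ ε) (hc : 0 ≤ c)
    (hform : ∀ ψ : Fin N → ℂ,
      |((star ψ) ⬝ᵥ ((W - W').mulVec ψ)).re|
        ≤ ε * ((star ψ) ⬝ᵥ (H₀.mulVec ψ)).re + c * ∑ i, ‖ψ i‖ ^ 2) :
    relEntropy (gibbs β (H₀ + W)) (gibbs β (H₀ + W'))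
        ≤ β * (ε * (Matrix.trace (gibbs β (H₀ + W) * H₀)).re
            + ε * (Matrix.trace (gibbs β (H₀ + W') * H₀)).re + 2 * c) ∧
      relEntropy (gibbs β (H₀ + W')) (gibbs β (H₀ + W))
        ≤ β * (ε * (Matrix.trace (gibbs β (H₀ + W) * H₀)).re
            + ε * (Matrix.trace (gibbs β (H₀ + W') * H₀)).re + 2 * c) := by
  by_cases hN : 0 < N
  · have hH : (H₀ + W).IsHermitian := hH₀.add hW
    have hH' : (H₀ + W').IsHermitian := hH₀.add hW'
    set ρ := gibbs β (H₀ + W) with hρdef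
    set σ := gibbs β (H₀ + W') with hσdef
    set t : ℝ := (Matrix.trace (ρ * (W - W'))).re with ht
    set t' : ℝ := (Matrix.trace (σ * (W - W'))).re with ht'
    set a : ℝ := (Matrix.trace (ρ * H₀)).re with ha
    set b : ℝ := (Matrix.trace (σ * H₀)).re with hb0
    set L : ℝ := Real.log (partitionZ β (H₀ + W)) with hL
    set L' : ℝ := Real.log (partitionZ β (H₀ + W')) with hL'
    have hd1 : (H₀ + W) - (H₀ + W') = W - W' := by abel
    have hd2 : (H₀ + W') - (H₀ + W) = -(W - W') := by abel
    have hD : relEntropy ρ σ = -β * t + (L' - L) := by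
      rw [hρdef, hσdef, relEntropy_gibbs_eq hH hH' β hN, hd1]
    have hD' : relEntropy σ ρ = β * t' + (L - L') := by
      calc relEntropy σ ρ
          = -β * (Matrix.trace (σ * -(W - W'))).re + (L - L') := by
            rw [hσdef, hρdef, relEntropy_gibbs_eq hH' hH β hN, hd2]
        _ = β * t' + (L - L') := by
            rw [Matrix.mul_neg, Matrix.trace_neg, Complex.neg_re, ht']
            ring
    have hbt : |t| ≤ ε * a + c := form_bound hH β hN hε (W - W') H₀ hform
    have hbt' : |t'| ≤ ε * b + c := form_bound hH' β hN hε (W - W') H₀ hform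
    have hK : 0 ≤ relEntropy σ ρ := klein hH' hH β hN
    have hK' : 0 ≤ relEntropy ρ σ := klein hH hH' β hN
    have e1 : relEntropy ρ σ + relEntropy σ ρ = β * (t' - t) := by
      rw [hD, hD']; ring
    have e2 : β * (t' - t) ≤ β * (|t| + |t'|) :=
      mul_le_mul_of_nonneg_left (by linarith [le_abs_self t', neg_abs_le t]) hβ.le
    have e3 : β * (|t| + |t'|) ≤ β * ((ε * a + c) + (ε * b + c)) :=
      mul_le_mul_of_nonneg_left (add_le_add hbt hbt') hβ.le
    have e4 : β * ((ε * a + c) + (ε * b + c)) = β * (ε * a + ε * b + 2 * c) := by ring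
    constructor
    · linarith
    · linarith
  · have hN0 : N = 0 := by omega
    subst hN0
    have hz : ∀ M M' : Matrix (Fin 0) (Fin 0) ℂ, relEntropy M M' = 0 := by
      intro M M'
      rw [relEntropy, Matrix.trace]
      simp
    have htz : ∀ M : Matrix (Fin 0) (Fin 0) ℂ, Matrix.trace M = 0 := by
      intro M
      rw [Matrix.trace]
      simp
    rw [hz, hz, htz, htz]
    constructor <;> · simp; positivity
end

section
/- Let A, B be Hermitian N×N complex matrices and β > 0. Then F_β(B) − F_β(A) = ∫₀¹ Tr( σ_β( (1−s)A + sB ) (B − A) ) ds, where the integrand is a real-valued continuous function of s ∈ [0,1]. -/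
open Matrix

section ThermoAux

open NormedSpace
open scoped Nat

attribute [local instance] Matrix.linftyOpNormedRing Matrix.linftyOpNormedAlgebra

variable {N : ℕ}

/-- Trace as a continuous linear map. -/
noncomputable def trCLM (N : ℕ) : @ContinuousLinearMap ℂ ℂ _ _ (RingHom.id ℂ) (Matrix (Fin N) (Fin N) ℂ)
    PseudoMetricSpace.toUniformSpace.toTopologicalSpace _ ℂ _ _ _ _ :=
  LinearMap.toContinuousLinearMap (Matrix.traceLinearMap (Fin N) ℂ ℂ)

@[simp] lemma trCLM_apply (X : Matrix (Fin N) (Fin N) ℂ) : trCLM N X = Matrix.trace X := rfl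

lemma hasDerivAt_pow_line (M₀ C : Matrix (Fin N) (Fin N) ℂ) (n : ℕ) (z : ℂ) :
    HasDerivAt (fun w : ℂ => (M₀ + w • C) ^ n)
      (∑ k ∈ Finset.range n, (M₀ + z • C) ^ k * C * (M₀ + z • C) ^ (n - 1 - k)) z := by
  induction n with
  | zero =>
    simp only [pow_zero, Finset.range_zero, Finset.sum_empty]
    exact hasDerivAt_const z (1 : Matrix (Fin N) (Fin N) ℂ)
  | succ n ih =>
    have hf : HasDerivAt (fun w : ℂ => M₀ + w • C) C z := by
      have h0 := (hasDerivAt_const z M₀).add ((hasDerivAt_id' z).smul_const C)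
      simp only [zero_add, one_smul] at h0
      exact h0
    have h : HasDerivAt (fun w : ℂ => (M₀ + w • C) * (M₀ + w • C) ^ n) _ z := hf.mul ih
    have hfun : (fun w : ℂ => (M₀ + w • C) * (M₀ + w • C) ^ n)
        = fun w : ℂ => (M₀ + w • C) ^ (n + 1) := by
      funext w; rw [← pow_succ']
    rw [hfun] at h
    convert h using 1
    rw [Finset.sum_range_succ']
    simp only [Nat.add_sub_cancel, pow_zero, one_mul, Nat.sub_zero, Finset.mul_sum]
    rw [add_comm]
    congr 1
    refine Finset.sum_congr rfl fun k hk => ?_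
    have he : n - (k + 1) = n - 1 - k := by omega
    rw [he, pow_succ']
    simp [mul_assoc]

lemma trace_derivSum (X C : Matrix (Fin N) (Fin N) ℂ) (n : ℕ) :
    Matrix.trace (∑ k ∈ Finset.range n, X ^ k * C * X ^ (n - 1 - k))
      = (n : ℂ) * Matrix.trace (X ^ (n - 1) * C) := by
  rw [Matrix.trace_sum]
  have key : ∀ k ∈ Finset.range n,
      Matrix.trace (X ^ k * C * X ^ (n - 1 - k)) = Matrix.trace (X ^ (n - 1) * C) := by
    intro k hk
    rw [Finset.mem_range] at hk
    have h3 : n - 1 - k + k = n - 1 := by omega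
    rw [Matrix.trace_mul_comm, ← mul_assoc, ← pow_add, h3]
  rw [Finset.sum_congr rfl key, Finset.sum_const, Finset.card_range, nsmul_eq_mul]

lemma fact_ratio (n : ℕ) : (n : ℝ) * ((n ! : ℝ))⁻¹ ≤ (((n - 1)! : ℝ))⁻¹ := by
  cases n with
  | zero => simp
  | succ m =>
    rw [Nat.add_sub_cancel, Nat.factorial_succ]
    push_cast
    rw [mul_inv, ← mul_assoc, mul_inv_cancel₀ (by positivity), one_mul]

lemma norm_pow_mul_le (X C : Matrix (Fin N) (Fin N) ℂ) (m : ℕ) :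
    ‖X ^ m * C‖ ≤ ‖X‖ ^ m * ‖C‖ := by
  cases m with
  | zero => simp
  | succ m =>
    exact (norm_mul_le _ _).trans
      (mul_le_mul_of_nonneg_right (norm_pow_le' X m.succ_pos) (norm_nonneg C))

lemma norm_trace_le (X : Matrix (Fin N) (Fin N) ℂ) :
    ‖Matrix.trace X‖ ≤ ‖trCLM N‖ * ‖X‖ := by
  rw [← trCLM_apply]; exact (trCLM N).le_opNorm X

lemma trace_exp_eq_tsum (X : Matrix (Fin N) (Fin N) ℂ) :
    Matrix.trace (exp X) = ∑' n : ℕ, (n ! : ℂ)⁻¹ • Matrix.trace (X ^ n) := by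
  rw [exp_eq_tsum (𝕂 := ℂ), ← trCLM_apply]
  have h := (trCLM N).map_tsum (expSeries_summable' (𝕂 := ℂ) X)
  simp only [map_smul, trCLM_apply] at h ⊢
  exact h

lemma hasDerivAt_trace_exp (M₀ C : Matrix (Fin N) (Fin N) ℂ) (z : ℂ) :
    HasDerivAt (fun w : ℂ => Matrix.trace (exp (M₀ + w • C)))
      (Matrix.trace (exp (M₀ + z • C) * C)) z := by
  set K := ‖trCLM N‖ with hK
  set R := ‖M₀‖ + (‖z‖ + 1) * ‖C‖ with hR
  have hR0 : 0 ≤ R := by positivity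
  have hzt : z ∈ Metric.ball (0 : ℂ) (‖z‖ + 1) := by
    simp [Metric.mem_ball, Complex.dist_eq]
  have h0t : (0 : ℂ) ∈ Metric.ball (0 : ℂ) (‖z‖ + 1) := by
    simp [Metric.mem_ball]
    positivity
  set g : ℕ → ℂ → ℂ := fun n w => (n ! : ℂ)⁻¹ • Matrix.trace ((M₀ + w • C) ^ n) with hg
  set g' : ℕ → ℂ → ℂ := fun n w =>
    (n ! : ℂ)⁻¹ • ((n : ℂ) * Matrix.trace ((M₀ + w • C) ^ (n - 1) * C)) with hg'
  set u : ℕ → ℝ := fun n => (((n - 1)! : ℝ))⁻¹ * (K * (R ^ (n - 1) * ‖C‖)) with hu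
  have hnorm : ∀ w ∈ Metric.ball (0 : ℂ) (‖z‖ + 1), ‖M₀ + w • C‖ ≤ R := by
    intro w hw
    rw [Metric.mem_ball, Complex.dist_eq, sub_zero] at hw
    refine (norm_add_le _ _).trans ?_
    rw [norm_smul, hR]
    have hwle : ‖w‖ ≤ ‖z‖ + 1 := hw.le
    gcongr
  have hder : ∀ n w, HasDerivAt (g n) (g' n w) w := by
    intro n w
    have hD := hasDerivAt_pow_line M₀ C n w
    have h2 := HasDerivAt.const_smul ((n ! : ℂ)⁻¹)
      ((trCLM N).hasFDerivAt.comp_hasDerivAt w hD)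
    have hval : g' n w = (n ! : ℂ)⁻¹ • trCLM N (∑ k ∈ Finset.range n,
        (M₀ + w • C) ^ k * C * (M₀ + w • C) ^ (n - 1 - k)) := by
      simp only [hg', trCLM_apply, trace_derivSum]
    rw [hval]
    exact h2
  have hbound : ∀ n w, w ∈ Metric.ball (0 : ℂ) (‖z‖ + 1) → ‖g' n w‖ ≤ u n := by
    intro n w hw
    have htr : ‖Matrix.trace ((M₀ + w • C) ^ (n - 1) * C)‖ ≤ K * (R ^ (n - 1) * ‖C‖) := by
      refine (norm_trace_le _).trans ?_
      rw [hK]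
      gcongr
      refine (norm_pow_mul_le _ _ _).trans ?_
      have h1 : ‖M₀ + w • C‖ ≤ R := hnorm w hw
      gcongr
    have heq : ‖g' n w‖
        = (n ! : ℝ)⁻¹ * ((n : ℝ) * ‖Matrix.trace ((M₀ + w • C) ^ (n - 1) * C)‖) := by
      simp [hg', norm_smul]
    rw [heq]
    calc (n ! : ℝ)⁻¹ * ((n : ℝ) * ‖Matrix.trace ((M₀ + w • C) ^ (n - 1) * C)‖)
        ≤ (n ! : ℝ)⁻¹ * ((n : ℝ) * (K * (R ^ (n - 1) * ‖C‖))) := by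
          gcongr
      _ = ((n : ℝ) * (n ! : ℝ)⁻¹) * (K * (R ^ (n - 1) * ‖C‖)) := by ring
      _ ≤ (((n - 1)! : ℝ))⁻¹ * (K * (R ^ (n - 1) * ‖C‖)) := by
          refine mul_le_mul_of_nonneg_right (fact_ratio n) ?_
          have : (0:ℝ) ≤ K := norm_nonneg _
          positivity
      _ = u n := rfl
  have hv : Summable (fun m : ℕ => ((m ! : ℝ))⁻¹ * (K * (R ^ m * ‖C‖))) := by
    have h1 : Summable (fun m : ℕ => R ^ m / (m ! : ℝ)) := Real.summable_pow_div_factorial R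
    have h2 := (h1.mul_left (K * ‖C‖))
    refine h2.congr fun m => ?_
    field_simp
  have hu_sum : Summable u := by
    refine (summable_nat_add_iff 1).mp ?_
    refine hv.congr fun m => ?_
    simp [hu]
  have hg0 : Summable fun n => g n 0 := by
    have hs := expSeries_summable' (𝕂 := ℂ) M₀
    have h2 := hs.map ((trCLM N).toLinearMap.toAddMonoidHom) (trCLM N).continuous
    refine h2.congr fun n => ?_
    simp [hg]
  have H := hasDerivAt_tsum_of_isPreconnected hu_sum Metric.isOpen_ball
    (convex_ball (0:ℂ) (‖z‖+1)).isPreconnected (fun n y _ => hder n y) hbound h0t hg0 hzt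
  have hfun : (fun w : ℂ => Matrix.trace (exp (M₀ + w • C))) = fun w => ∑' n, g n w := by
    funext w
    rw [trace_exp_eq_tsum]
  have hsum_b : Summable (fun n => g' n z) :=
    Summable.of_norm_bounded hu_sum (fun n => hbound n z hzt)
  have hderiv_eq : (∑' n, g' n z) = Matrix.trace (exp (M₀ + z • C) * C) := by
    rw [hsum_b.tsum_eq_zero_add]
    have hb0 : g' 0 z = 0 := by simp [hg']
    have hbs : ∀ m : ℕ, g' (m + 1) z
        = (m ! : ℂ)⁻¹ • Matrix.trace ((M₀ + z • C) ^ m * C) := by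
      intro m
      have h1 : ((m : ℂ) + 1) ≠ 0 := Nat.cast_add_one_ne_zero m
      have h2 : ((m ! : ℂ)) ≠ 0 := Nat.cast_ne_zero.mpr (Nat.factorial_ne_zero m)
      simp only [hg', Nat.add_sub_cancel, Nat.factorial_succ, smul_eq_mul]
      push_cast
      rw [mul_inv]
      field_simp
    rw [hb0, zero_add, tsum_congr hbs]
    have hs := expSeries_summable' (𝕂 := ℂ) (M₀ + z • C)
    have hs2 : Summable fun m : ℕ => ((m ! : ℂ)⁻¹ • (M₀ + z • C) ^ m) * C :=
      hs.mul_right C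
    calc (∑' m : ℕ, (m ! : ℂ)⁻¹ • Matrix.trace ((M₀ + z • C) ^ m * C))
        = ∑' m : ℕ, Matrix.trace (((m ! : ℂ)⁻¹ • (M₀ + z • C) ^ m) * C) := by
          refine tsum_congr fun m => ?_
          rw [smul_mul_assoc, Matrix.trace_smul]
      _ = Matrix.trace (∑' m : ℕ, ((m ! : ℂ)⁻¹ • (M₀ + z • C) ^ m) * C) := by
          rw [← trCLM_apply]
          have h := (trCLM N).map_tsum hs2
          simp only [trCLM_apply] at h ⊢
          exact h.symm
      _ = Matrix.trace ((∑' m : ℕ, (m ! : ℂ)⁻¹ • (M₀ + z • C) ^ m) * C) := by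
          exact congrArg Matrix.trace (hs.tsum_mul_right C)
      _ = Matrix.trace (exp (M₀ + z • C) * C) := by simp only [exp_eq_tsum (𝕂 := ℂ)]
  rw [hfun, ← hderiv_eq]
  exact H

lemma trace_exp_re_pos (hN : 0 < N) {X : Matrix (Fin N) (Fin N) ℂ}
    (hX : X.IsHermitian) : 0 < (Matrix.trace (exp X)).re := by
  have h2 : X = (2⁻¹ : ℂ) • X + (2⁻¹ : ℂ) • X := by
    rw [← add_smul]; norm_num
  have hherm : ((2⁻¹ : ℂ) • X).IsHermitian := by
    unfold Matrix.IsHermitian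
    rw [Matrix.conjTranspose_smul, hX.eq]
    norm_num
  set Y := exp ((2⁻¹ : ℂ) • X) with hYdef
  have hY : Y.IsHermitian := Matrix.IsHermitian.exp hherm
  have hXY : exp X = Y * Y := by
    conv_lhs => rw [h2]
    exact Matrix.exp_add_of_commute _ _ (Commute.refl _)
  have hunit : IsUnit Y := Matrix.isUnit_exp _
  haveI : Nonempty (Fin N) := ⟨⟨0, hN⟩⟩
  have hne0 : Y ≠ 0 := hunit.ne_zero
  have hij : ∃ i j, Y i j ≠ 0 := by
    by_contra h
    push_neg at h
    apply hne0
    ext i j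
    simpa using h i j
  have hentry : ∀ i j, Y j i = starRingEnd ℂ (Y i j) := by
    intro i j
    conv_lhs => rw [← hY.eq]
    rfl
  have hre : (Matrix.trace (exp X)).re = ∑ i, ∑ j, Complex.normSq (Y i j) := by
    rw [hXY, Matrix.trace]
    simp only [Matrix.diag, Matrix.mul_apply]
    rw [Complex.re_sum]
    refine Finset.sum_congr rfl fun i _ => ?_
    rw [Complex.re_sum]
    refine Finset.sum_congr rfl fun j _ => ?_
    rw [hentry i j, Complex.mul_conj]
    simp
  rw [hre]
  obtain ⟨i₀, j₀, hij0⟩ := hij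
  refine Finset.sum_pos' (fun i _ => Finset.sum_nonneg fun j _ => Complex.normSq_nonneg _) ?_
  refine ⟨i₀, Finset.mem_univ _, ?_⟩
  refine Finset.sum_pos' (fun j _ => Complex.normSq_nonneg _) ?_
  exact ⟨j₀, Finset.mem_univ _, Complex.normSq_pos.mpr hij0⟩

/-- **Thermodynamic integration identity.** -/
theorem freeEnergy_thermodynamic_integration (N : ℕ)
    (A B : Matrix (Fin N) (Fin N) ℂ)
    (hA : A.IsHermitian) (hB : B.IsHermitian) (β : ℝ) (hβ : 0 < β) :
    freeEnergy β B - freeEnergy β A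
      = ∫ s in (0 : ℝ)..1,
          (Matrix.trace
            (gibbs β ((((1 - s : ℝ)) : ℂ) • A + ((s : ℝ) : ℂ) • B) * (B - A))).re ∧
      Continuous (fun s : ℝ =>
        (Matrix.trace
          (gibbs β ((((1 - s : ℝ)) : ℂ) • A + ((s : ℝ) : ℂ) • B) * (B - A))).re) := by
  rcases Nat.eq_zero_or_pos N with hN | hN
  · subst hN
    constructor
    · simp [freeEnergy, partitionZ, Matrix.trace]
    · simpa [Matrix.trace] using continuous_const
  have hbne : β ≠ 0 := hβ.ne'
  set M₀ : Matrix (Fin N) (Fin N) ℂ := (-β : ℂ) • A with hM₀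
  set C : Matrix (Fin N) (Fin N) ℂ := (-β : ℂ) • (B - A) with hC
  have hHs : ∀ s : ℝ, (-β : ℂ) • ((((1 - s : ℝ)) : ℂ) • A + ((s : ℝ) : ℂ) • B)
      = M₀ + (s : ℂ) • C := by
    intro s
    rw [hM₀, hC]
    push_cast
    module
  have hherm : ∀ s : ℝ, (M₀ + (s : ℂ) • C).IsHermitian := by
    intro s
    rw [← hHs s]
    unfold Matrix.IsHermitian
    simp [Matrix.conjTranspose_smul, Matrix.conjTranspose_add, hA.eq, hB.eq,
      Complex.star_def, Complex.conj_ofReal]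
  have hZpos : ∀ s : ℝ, 0 < (Matrix.trace (exp (M₀ + (s : ℂ) • C))).re :=
    fun s => trace_exp_re_pos hN (hherm s)
  have hZderiv : ∀ s : ℝ, HasDerivAt
      (fun r : ℝ => (Matrix.trace (exp (M₀ + (r : ℂ) • C))).re)
      ((Matrix.trace (exp (M₀ + (s : ℂ) • C) * C)).re) s :=
    fun s => (hasDerivAt_trace_exp M₀ C (s : ℂ)).real_of_complex
  have hFderiv : ∀ s : ℝ, HasDerivAt
      (fun r : ℝ => -β⁻¹ * Real.log ((Matrix.trace (exp (M₀ + (r : ℂ) • C))).re))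
      (-β⁻¹ * ((Matrix.trace (exp (M₀ + (s : ℂ) • C) * C)).re
        / (Matrix.trace (exp (M₀ + (s : ℂ) • C))).re)) s :=
    fun s => ((hZderiv s).log (hZpos s).ne').const_mul _
  have hIs : ∀ s : ℝ,
      (Matrix.trace (gibbs β ((((1 - s : ℝ)) : ℂ) • A + ((s : ℝ) : ℂ) • B) * (B - A))).re
      = -β⁻¹ * ((Matrix.trace (exp (M₀ + (s : ℂ) • C) * C)).re
        / (Matrix.trace (exp (M₀ + (s : ℂ) • C))).re) := by
    intro s
    have hZne : (Matrix.trace (exp (M₀ + (s : ℂ) • C))).re ≠ 0 := (hZpos s).ne'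
    have hTrC : Matrix.trace (exp (M₀ + (s : ℂ) • C) * C)
        = (-β : ℂ) * Matrix.trace (exp (M₀ + (s : ℂ) • C) * (B - A)) := by
      rw [hC, Matrix.mul_smul, Matrix.trace_smul, smul_eq_mul]
    simp only [gibbs, partitionZ, hHs s]
    rw [Matrix.smul_mul, Matrix.trace_smul, hTrC]
    rw [show ((-β : ℂ)) = ((-β : ℝ) : ℂ) by push_cast; ring]
    rw [Complex.re_ofReal_mul]
    rw [show ((((Matrix.trace (exp (M₀ + (s : ℂ) • C))).re : ℝ) : ℂ))⁻¹
      = ((((Matrix.trace (exp (M₀ + (s : ℂ) • C))).re)⁻¹ : ℝ) : ℂ) by push_cast; ring]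
    rw [smul_eq_mul, Complex.re_ofReal_mul]
    field_simp
  -- continuity
  have hfc : Continuous (fun s : ℝ => exp (M₀ + (s : ℂ) • C)) :=
    exp_continuous.comp (continuous_const.add (Complex.continuous_ofReal.smul continuous_const))
  have hTc : Continuous (fun s : ℝ => (Matrix.trace (exp (M₀ + (s : ℂ) • C) * C)).re) := by
    have := Complex.continuous_re.comp ((trCLM N).continuous.comp (hfc.mul (continuous_const : Continuous fun _ : ℝ => C)))
    simpa [Function.comp_def, Pi.mul_apply] using this
  have hZc : Continuous (fun s : ℝ => (Matrix.trace (exp (M₀ + (s : ℂ) • C))).re) := by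
    have := Complex.continuous_re.comp ((trCLM N).continuous.comp hfc)
    simpa [Function.comp_def] using this
  have hIcont : Continuous (fun s : ℝ =>
      (Matrix.trace (gibbs β ((((1 - s : ℝ)) : ℂ) • A + ((s : ℝ) : ℂ) • B) * (B - A))).re) := by
    have heq : (fun s : ℝ =>
        (Matrix.trace (gibbs β ((((1 - s : ℝ)) : ℂ) • A + ((s : ℝ) : ℂ) • B) * (B - A))).re)
        = fun s : ℝ => -β⁻¹ * ((Matrix.trace (exp (M₀ + (s : ℂ) • C) * C)).re
          / (Matrix.trace (exp (M₀ + (s : ℂ) • C))).re) := funext hIs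
    rw [heq]
    exact continuous_const.mul (hTc.div hZc fun s => (hZpos s).ne')
  refine ⟨?_, hIcont⟩
  have hint : IntervalIntegrable (fun s : ℝ =>
      (Matrix.trace (gibbs β ((((1 - s : ℝ)) : ℂ) • A + ((s : ℝ) : ℂ) • B) * (B - A))).re)
      MeasureTheory.volume 0 1 := hIcont.intervalIntegrable 0 1
  have hkey := intervalIntegral.integral_eq_sub_of_hasDerivAt
    (f := fun r : ℝ => -β⁻¹ * Real.log ((Matrix.trace (exp (M₀ + (r : ℂ) • C))).re))
    (fun t _ => by rw [hIs t]; exact hFderiv t) hint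
  rw [hkey]
  have hF1 : M₀ + ((1 : ℝ) : ℂ) • C = (-β : ℂ) • B := by
    rw [hM₀, hC]; push_cast; module
  have hF0 : M₀ + ((0 : ℝ) : ℂ) • C = (-β : ℂ) • A := by
    rw [hM₀, hC]; push_cast; module
  simp only [hF1, hF0]
  simp [freeEnergy, partitionZ]
end ThermoAux
end

section
/- Let H be a Hermitian N×N complex matrix, P an orthogonal projection matrix with PH = HP, β > 0, and ψ ∈ ℂᴺ a unit vector with Pψ = ψ. Then ⟨ψ, e^{βH} ψ⟩ ≤ e^{β‖PHP‖}, and consequently the rank-one projection |ψ⟩⟨ψ| satisfies |ψ⟩⟨ψ| ⪯ Tr(e^{−βH}) · e^{β‖PHP‖} · σ_β(H) in the Loewner (positive semidefinite) order. Moreover, for any positive definite Hermitian matrix σ and any c ≥ 0, the Loewner inequality |ψ⟩⟨ψ| ⪯ c σ holds if and only if c ≥ ⟨ψ, σ^{−1} ψ⟩. -/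
open Matrix ComplexOrder

/-- Operator norm of a matrix acting on `EuclideanSpace ℂ (Fin N)`
(i.e. with respect to the Euclidean norm on `ℂᴺ`). -/
noncomputable def matOpNorm {N : ℕ} (V : Matrix (Fin N) (Fin N) ℂ) : ℝ :=
  ‖Matrix.toEuclideanCLM (𝕜 := ℂ) V‖

set_option maxHeartbeats 1000000

section PureGibbsHelpers

/-- Cauchy–Schwarz for the complex dot product. -/
private lemma cs_dot {N : ℕ} (x y : Fin N → ℂ) :
    ‖star x ⬝ᵥ y‖ ^ 2 ≤ (star x ⬝ᵥ x).re * (star y ⬝ᵥ y).re := by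
  have hx := (EuclideanSpace.inner_toLp_toLp (𝕜 := ℂ) x x).trans (dotProduct_comm _ _)
  have hy := (EuclideanSpace.inner_toLp_toLp (𝕜 := ℂ) y y).trans (dotProduct_comm _ _)
  have hxy := (EuclideanSpace.inner_toLp_toLp (𝕜 := ℂ) x y).trans (dotProduct_comm _ _)
  rw [← hxy, ← hx, ← hy]
  have h1 := norm_inner_le_norm (𝕜 := ℂ) (WithLp.toLp 2 x) (WithLp.toLp 2 y)
  have h2 := inner_self_eq_norm_sq (𝕜 := ℂ) (WithLp.toLp 2 x)
  have h3 := inner_self_eq_norm_sq (𝕜 := ℂ) (WithLp.toLp 2 y)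
  rw [RCLike.re_to_complex] at h2 h3
  rw [h2, h3, ← mul_pow]
  exact pow_le_pow_left₀ (norm_nonneg _) h1 2

private lemma dot_shift {N : ℕ} (B : Matrix (Fin N) (Fin N) ℂ) (x z : Fin N → ℂ) :
    star (B *ᵥ x) ⬝ᵥ z = star x ⬝ᵥ (Bᴴ *ᵥ z) := by
  rw [star_mulVec, dotProduct_mulVec]

private lemma vecMulVec_mulVec' {N : ℕ} (ψ v : Fin N → ℂ) :
    (vecMulVec ψ (star ψ)) *ᵥ v = (star ψ ⬝ᵥ v) • ψ := by
  funext i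
  simp only [Matrix.mulVec, dotProduct, Matrix.vecMulVec_apply, Pi.smul_apply,
    smul_eq_mul, Finset.sum_mul]
  exact Finset.sum_congr rfl fun j _ => by ring

private lemma vecMulVec_herm {N : ℕ} (ψ : Fin N → ℂ) : (vecMulVec ψ (star ψ)).IsHermitian := by
  ext i j
  simp only [conjTranspose_apply, vecMulVec_apply, Pi.star_apply, star_mul', star_star]
  ring

/-- The Loewner-order characterization `|ψ⟩⟨ψ| ⪯ c σ ↔ ⟨ψ, σ⁻¹ ψ⟩ ≤ c`. -/
private lemma part3 {N : ℕ} (ψ : Fin N → ℂ) (hψ0 : ψ ≠ 0)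
    (σ : Matrix (Fin N) (Fin N) ℂ) (hσ : σ.PosDef) (c : ℝ) (hc : 0 ≤ c) :
    (Matrix.PosSemidef (((c : ℝ) : ℂ) • σ - Matrix.vecMulVec ψ (star ψ))
      ↔ ((star ψ) ⬝ᵥ (σ⁻¹.mulVec ψ)).re ≤ c) := by
  have hdet : IsUnit σ.det := (Matrix.isUnit_iff_isUnit_det σ).mp hσ.isUnit
  have hinv : σ⁻¹.PosDef := hσ.inv
  set t : ℂ := star ψ ⬝ᵥ (σ⁻¹ *ᵥ ψ) with ht
  have htre : 0 < t.re := by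
    have := hinv.re_dotProduct_pos hψ0
    simpa [RCLike.re_to_complex] using this
  have him : t.im = 0 := by
    have h0 : (0 : ℂ) ≤ t := le_of_lt (hinv.dotProduct_mulVec_pos hψ0)
    exact (Complex.nonneg_iff.mp h0).2.symm
  have hquad : ∀ v : Fin N → ℂ,
      star v ⬝ᵥ ((((c : ℝ) : ℂ) • σ - Matrix.vecMulVec ψ (star ψ)) *ᵥ v)
        = (c : ℂ) * (star v ⬝ᵥ (σ *ᵥ v)) - (star ψ ⬝ᵥ v) * (star v ⬝ᵥ ψ) := by
    intro v
    rw [Matrix.sub_mulVec, dotProduct_sub, Matrix.smul_mulVec, dotProduct_smul,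
      vecMulVec_mulVec', dotProduct_smul]
    simp [smul_eq_mul]
  constructor
  · intro hpsd
    have h := hpsd.dotProduct_mulVec_nonneg (σ⁻¹ *ᵥ ψ)
    rw [hquad] at h
    have h1 : σ *ᵥ (σ⁻¹ *ᵥ ψ) = ψ := by
      rw [Matrix.mulVec_mulVec, Matrix.mul_nonsing_inv _ hdet, Matrix.one_mulVec]
    have h2 : star (σ⁻¹ *ᵥ ψ) ⬝ᵥ ψ = t := by
      rw [dot_shift, hinv.isHermitian.eq]
    rw [h1, h2, ht] at h
    have hre := (Complex.nonneg_iff.mp h).1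
    simp only [Complex.sub_re, Complex.mul_re, Complex.ofReal_re, Complex.ofReal_im, him] at hre
    nlinarith [htre]
  · intro hcle
    have hherm : (((c : ℝ) : ℂ) • σ).IsHermitian := by
      rw [Matrix.IsHermitian, conjTranspose_smul, Complex.star_def, Complex.conj_ofReal,
        hσ.isHermitian.eq]
    refine Matrix.PosSemidef.of_dotProduct_mulVec_nonneg (hherm.sub (vecMulVec_herm ψ)) ?_
    intro v
    rw [hquad]
    obtain ⟨S, hS_psd, hS_mul⟩ : ∃ S : Matrix (Fin N) (Fin N) ℂ, S.PosSemidef ∧ S * S = σ :=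
      by
        open scoped MatrixOrder in
        exact ⟨CFC.sqrt σ, (CFC.sqrt_nonneg σ).posSemidef, CFC.sqrt_mul_sqrt_self σ hσ.posSemidef.nonneg⟩
    have hSherm : S.IsHermitian := hS_psd.isHermitian
    have hSdet : IsUnit S.det := by
      have : S.det * S.det = σ.det := by rw [← Matrix.det_mul, hS_mul]
      exact isUnit_of_mul_isUnit_left (this ▸ hdet)
    have hSinv_herm : S⁻¹.IsHermitian := hSherm.inv
    set x := S⁻¹ *ᵥ ψ
    set y := S *ᵥ v
    have hxy : star x ⬝ᵥ y = star ψ ⬝ᵥ v := by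
      rw [dot_shift, hSinv_herm.eq, Matrix.mulVec_mulVec, Matrix.nonsing_inv_mul _ hSdet,
        Matrix.one_mulVec]
    have hxx : star x ⬝ᵥ x = t := by
      rw [dot_shift, hSinv_herm.eq, Matrix.mulVec_mulVec, ht]
      congr 1
      rw [← Matrix.mul_inv_rev, hS_mul]
    have hyy : star y ⬝ᵥ y = star v ⬝ᵥ (σ *ᵥ v) := by
      rw [dot_shift, hSherm.eq, Matrix.mulVec_mulVec, hS_mul]
    have hCS := cs_dot x y
    rw [hxy, hxx, hyy] at hCS
    have hQ : (0:ℂ) ≤ star v ⬝ᵥ (σ *ᵥ v) := hσ.posSemidef.dotProduct_mulVec_nonneg v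
    obtain ⟨hQre, hQim⟩ := Complex.nonneg_iff.mp hQ
    set Q := star v ⬝ᵥ (σ *ᵥ v) with hQdef
    have hpair : (star ψ ⬝ᵥ v) * (star v ⬝ᵥ ψ) = ((‖star ψ ⬝ᵥ v‖ ^ 2 : ℝ) : ℂ) := by
      have : star v ⬝ᵥ ψ = starRingEnd ℂ (star ψ ⬝ᵥ v) := by
        simp only [dotProduct, map_sum, Pi.star_apply, Complex.star_def]
        exact Finset.sum_congr rfl fun j _ => by
          rw [map_mul (starRingEnd ℂ), Complex.conj_conj, mul_comm]
      rw [this, Complex.mul_conj']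
      norm_cast
    rw [hpair]
    rw [Complex.nonneg_iff]
    constructor
    · simp only [Complex.sub_re, Complex.mul_re, Complex.ofReal_re, Complex.ofReal_im]
      have : ‖star ψ ⬝ᵥ v‖ ^ 2 ≤ t.re * Q.re := hCS
      nlinarith
    · simp [Complex.sub_im, Complex.mul_im, ← hQim, ← Complex.ofReal_pow]

private lemma norm_exp_le' {𝔸 : Type*} [NormedRing 𝔸] [NormedAlgebra ℂ 𝔸] [CompleteSpace 𝔸]
    (h1 : ‖(1 : 𝔸)‖ ≤ 1) (A : 𝔸) :
    ‖NormedSpace.exp A‖ ≤ Real.exp ‖A‖ := by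
  simp only [NormedSpace.exp_eq_tsum ℂ]
  have hsum : Summable fun n : ℕ => ‖((n.factorial : ℂ))⁻¹ • A ^ n‖ :=
    NormedSpace.norm_expSeries_summable' (𝕂 := ℂ) A
  have hsum2 : Summable fun n : ℕ => ‖A‖ ^ n / n.factorial :=
    Real.summable_pow_div_factorial ‖A‖
  refine (norm_tsum_le_tsum_norm hsum).trans ?_
  have hle : ∀ n : ℕ, ‖((n.factorial : ℂ))⁻¹ • A ^ n‖ ≤ ‖A‖ ^ n / n.factorial := by
    intro n
    rw [norm_smul, norm_inv, Complex.norm_natCast, div_eq_inv_mul]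
    have hfac : (0:ℝ) ≤ ((n.factorial : ℝ))⁻¹ := by positivity
    refine mul_le_mul_of_nonneg_left ?_ hfac
    cases n with
    | zero => simpa using h1
    | succ m => exact norm_pow_le' A m.succ_pos
  calc ∑' n : ℕ, ‖((n.factorial : ℂ))⁻¹ • A ^ n‖ ≤ ∑' n : ℕ, ‖A‖ ^ n / n.factorial :=
        Summable.tsum_le_tsum hle hsum hsum2
    _ = Real.exp ‖A‖ := by
        rw [Real.exp_eq_exp_ℝ, NormedSpace.exp_eq_tsum_div]

private lemma hp_pow {R : Type*} [Ring R] (H P : R) (hProj : P * P = P) (hcomm : P * H = H * P) :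
    ∀ n : ℕ, (H * P) ^ n * P = H ^ n * P
  | 0 => by simp
  | n + 1 => by
    have ih := hp_pow H P hProj hcomm n
    have hc : P * H ^ n = H ^ n * P := (Commute.pow_right hcomm n : _)
    rw [pow_succ', mul_assoc, ih, pow_succ', ← mul_assoc, mul_assoc H P, hc, ← mul_assoc,
      mul_assoc, hProj, mul_assoc]

private lemma exp_mul_proj {𝔸 : Type*} [NormedRing 𝔸] [NormedAlgebra ℂ 𝔸] [CompleteSpace 𝔸]
    (H P : 𝔸) (hProj : P * P = P) (hcomm : P * H = H * P) (c : ℂ) :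
    NormedSpace.exp (c • (H * P)) * P = NormedSpace.exp (c • H) * P := by
  simp only [NormedSpace.exp_eq_tsum ℂ]
  rw [← (NormedSpace.expSeries_summable' (𝕂 := ℂ) (c • (H * P))).tsum_mul_right P,
    ← (NormedSpace.expSeries_summable' (𝕂 := ℂ) (c • H)).tsum_mul_right P]
  refine tsum_congr fun n => ?_
  rw [smul_mul_assoc, smul_mul_assoc, smul_pow, smul_pow, smul_mul_assoc, smul_mul_assoc,
    hp_pow H P hProj hcomm n]

open scoped Matrix.Norms.L2Operator in
private lemma part1 {N : ℕ} (H P : Matrix (Fin N) (Fin N) ℂ)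
    (hProj : P * P = P) (hcomm : P * H = H * P) (β : ℝ) (hβ : 0 < β)
    (ψ : Fin N → ℂ) (hψ : ∑ i, ‖ψ i‖ ^ 2 = 1) (hPψ : P.mulVec ψ = ψ) :
    ((star ψ) ⬝ᵥ ((NormedSpace.exp ((β : ℂ) • H)).mulVec ψ)).re
        ≤ Real.exp (β * matOpNorm (P * H * P)) := by
  have hPHP : P * H * P = H * P := by rw [hcomm, mul_assoc, hProj]
  rw [hPHP]
  have hred : (NormedSpace.exp ((β : ℂ) • H)) *ᵥ ψ
      = (NormedSpace.exp ((β : ℂ) • (H * P))) *ᵥ ψ := by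
    conv_lhs => rw [← hPψ, Matrix.mulVec_mulVec,
      ← exp_mul_proj H P hProj hcomm (β : ℂ), ← Matrix.mulVec_mulVec, hPψ]
  rw [hred]
  set M := NormedSpace.exp ((β : ℂ) • (H * P)) with hM
  set ψ' : EuclideanSpace ℂ (Fin N) := WithLp.toLp 2 ψ with hψ'
  have hψ'norm : ‖ψ'‖ = 1 := by
    rw [EuclideanSpace.norm_eq]
    have : ∀ i, ‖ψ' i‖ = ‖ψ i‖ := fun i => rfl
    simp only [this, hψ, Real.sqrt_one]
  have hdot : (star ψ) ⬝ᵥ (M *ᵥ ψ)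
      = (inner ℂ ψ' ((Matrix.toEuclideanCLM (𝕜 := ℂ) M) ψ') : ℂ) := by
    rw [hψ', Matrix.toEuclideanCLM_toLp,
      EuclideanSpace.inner_toLp_toLp, dotProduct_comm]
  rw [hdot]
  have hb1 : ((inner ℂ ψ' ((Matrix.toEuclideanCLM (𝕜 := ℂ) M) ψ') : ℂ)).re ≤ ‖M‖ := by
    refine (Complex.re_le_norm _).trans ?_
    refine (norm_inner_le_norm _ _).trans ?_
    rw [hψ'norm, one_mul]
    calc ‖(Matrix.toEuclideanCLM (𝕜 := ℂ) M) ψ'‖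
        ≤ ‖Matrix.toEuclideanCLM (𝕜 := ℂ) M‖ * ‖ψ'‖ := ContinuousLinearMap.le_opNorm _ _
      _ = ‖M‖ := by rw [hψ'norm, mul_one, ← Matrix.cstar_norm_def]
  refine hb1.trans ?_
  have h1le : ‖(1 : Matrix (Fin N) (Fin N) ℂ)‖ ≤ 1 := by
    rw [Matrix.cstar_norm_def, _root_.map_one, ContinuousLinearMap.one_def]
    exact ContinuousLinearMap.norm_id_le
  have hb2 : ‖M‖ ≤ Real.exp ‖(β : ℂ) • (H * P)‖ := norm_exp_le' h1le _
  refine hb2.trans ?_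
  have hnorm : ‖(β : ℂ) • (H * P)‖ = β * ‖H * P‖ := by
    rw [norm_smul, Complex.norm_real, Real.norm_of_nonneg hβ.le]
  rw [hnorm, Matrix.cstar_norm_def]
  exact le_of_eq rfl

private lemma exp_posDef {N : ℕ} (H : Matrix (Fin N) (Fin N) ℂ) (hH : H.IsHermitian) (r : ℝ) :
    (NormedSpace.exp ((r : ℂ) • H)).PosDef := by
  have hherm : ∀ s : ℝ, ((s : ℂ) • H).IsHermitian := fun s => by
    rw [Matrix.IsHermitian, conjTranspose_smul, Complex.star_def, Complex.conj_ofReal, hH.eq]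
  set B := NormedSpace.exp (((r / 2 : ℝ) : ℂ) • H) with hB
  have hBherm : B.IsHermitian := Matrix.IsHermitian.exp (hherm (r / 2))
  have hsplit : NormedSpace.exp ((r : ℂ) • H) = B * B := by
    rw [hB, ← Matrix.exp_add_of_commute _ _ (Commute.refl _), ← add_smul]
    norm_num
  have hBunit : IsUnit B := Matrix.isUnit_exp _
  have hBinj : Function.Injective (B.mulVec ·) :=
    Matrix.mulVec_injective_iff_isUnit.mpr hBunit
  refine Matrix.PosDef.of_dotProduct_mulVec_pos ?_ ?_
  · rw [Matrix.IsHermitian, hsplit, conjTranspose_mul, hBherm.eq]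
  · intro x hx
    have hBx : B *ᵥ x ≠ 0 := by
      intro h0
      exact hx (hBinj (h0.trans (Matrix.mulVec_zero B).symm))
    have : star (B *ᵥ x) ⬝ᵥ (B *ᵥ x) = star x ⬝ᵥ ((B * B) *ᵥ x) := by
      rw [dot_shift, hBherm.eq, Matrix.mulVec_mulVec]
    rw [hsplit, ← this]
    exact dotProduct_star_self_pos_iff.mpr hBx

end PureGibbsHelpers

/-- **Domination of a low-energy pure state by the Gibbs state.**
For Hermitian `H`, an orthogonal projection `P` commuting with `H`, `β > 0`
and a unit vector `ψ` with `Pψ = ψ`: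
`⟨ψ, e^{βH}ψ⟩ ≤ e^{β‖PHP‖}`; consequently
`|ψ⟩⟨ψ| ⪯ Tr(e^{−βH}) e^{β‖PHP‖} σ_β(H)` in the Loewner order; moreover for
any positive definite `σ` and `c ≥ 0`, `|ψ⟩⟨ψ| ⪯ c σ ↔ ⟨ψ, σ⁻¹ψ⟩ ≤ c`. -/


theorem pure_state_dominated_by_gibbs (N : ℕ)
    (H P : Matrix (Fin N) (Fin N) ℂ)
    (hH : H.IsHermitian) (hP : P.IsHermitian) (hProj : P * P = P)
    (hcomm : P * H = H * P) (β : ℝ) (hβ : 0 < β)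
    (ψ : Fin N → ℂ) (hψ : ∑ i, ‖ψ i‖ ^ 2 = 1) (hPψ : P.mulVec ψ = ψ) :
    ((star ψ) ⬝ᵥ ((NormedSpace.exp ((β : ℂ) • H)).mulVec ψ)).re
        ≤ Real.exp (β * matOpNorm (P * H * P)) ∧
      Matrix.PosSemidef
        ((((partitionZ β H * Real.exp (β * matOpNorm (P * H * P)) : ℝ)) : ℂ)
            • gibbs β H
          - Matrix.vecMulVec ψ (star ψ)) ∧
      ∀ σ : Matrix (Fin N) (Fin N) ℂ, σ.PosDef → ∀ c : ℝ, 0 ≤ c →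
        (Matrix.PosSemidef (((c : ℝ) : ℂ) • σ - Matrix.vecMulVec ψ (star ψ))
          ↔ ((star ψ) ⬝ᵥ (σ⁻¹.mulVec ψ)).re ≤ c) := by
  have hψ0 : ψ ≠ 0 := by
    intro h0
    rw [h0] at hψ
    simp at hψ
  have key1 := part1 H P hProj hcomm β hβ ψ hψ hPψ
  have key3 : ∀ σ : Matrix (Fin N) (Fin N) ℂ, σ.PosDef → ∀ c : ℝ, 0 ≤ c →
      (Matrix.PosSemidef (((c : ℝ) : ℂ) • σ - Matrix.vecMulVec ψ (star ψ))
        ↔ ((star ψ) ⬝ᵥ (σ⁻¹.mulVec ψ)).re ≤ c) :=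
    fun σ hσ c hc => part3 ψ hψ0 σ hσ c hc
  refine ⟨key1, ?_, key3⟩
  set E := NormedSpace.exp ((-β : ℂ) • H) with hE
  have hEpos : E.PosDef := by
    have hcast : ((-β : ℝ) : ℂ) = (-β : ℂ) := by push_cast; ring
    rw [hE, ← hcast]
    exact exp_posDef H hH (-β)
  have hNE : Nonempty (Fin N) := by
    rcases Function.ne_iff.mp hψ0 with ⟨i, -⟩
    exact ⟨i⟩
  have hZpos : 0 < partitionZ β H := by
    have hdiag : ∀ i, 0 < (E i i).re := by
      intro i
      have hsingle : (Pi.single i 1 : Fin N → ℂ) ≠ 0 := by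
        intro h
        have := congr_fun h i
        simp at this
      have hpos := hEpos.re_dotProduct_pos hsingle
      have hval : star (Pi.single i (1:ℂ) : Fin N → ℂ) ⬝ᵥ (E *ᵥ (Pi.single i (1:ℂ) : Fin N → ℂ)) = E i i := by
        have hstar : star (Pi.single i (1:ℂ) : Fin N → ℂ) = (Pi.single i (1:ℂ) : Fin N → ℂ) := by
          funext j
          simp [Pi.single_apply, apply_ite]
        rw [hstar, Matrix.mulVec_single, single_dotProduct, one_mul]
        simp
      rw [hval] at hpos
      simpa [RCLike.re_to_complex] using hpos
    have : partitionZ β H = ∑ i, (E i i).re := by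
      rw [partitionZ, Matrix.trace, ← hE]
      simp [Matrix.diag, Complex.re_sum]
    rw [this]
    exact Finset.sum_pos (fun i _ => hdiag i) Finset.univ_nonempty
  have hZne : ((partitionZ β H : ℝ) : ℂ) ≠ 0 := Complex.ofReal_ne_zero.mpr hZpos.ne'
  have hsmul : (((partitionZ β H * Real.exp (β * matOpNorm (P * H * P)) : ℝ)) : ℂ)
      • gibbs β H = ((Real.exp (β * matOpNorm (P * H * P)) : ℝ) : ℂ) • E := by
    rw [gibbs, smul_smul, ← hE]
    congr 1
    push_cast
    field_simp
  rw [hsmul]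
  have hEinv : E⁻¹ = NormedSpace.exp ((β : ℂ) • H) := by
    have h1 : E = (NormedSpace.exp ((β : ℂ) • H))⁻¹ := by
      rw [hE, neg_smul, Matrix.exp_neg]
    rw [h1, Matrix.nonsing_inv_nonsing_inv]
    exact (Matrix.isUnit_iff_isUnit_det _).mp (Matrix.isUnit_exp _)
  refine (key3 E hEpos _ (Real.exp_nonneg _)).mpr ?_
  rw [hEinv]
  exact key1
end

section
/- Let ℋ be a complex Hilbert space, H₀ a bounded self-adjoint operator on ℋ, A a bounded operator on ℋ, J a finite index set, and for each j ∈ J let V_j be a bounded self-adjoint operator and α_j ∈ ℝ; set W := Σ_{j∈J} α_j V_j and H := H₀ + W. Assume there is a constant C ≥ 0 with ‖ [ V_j, e^{itH₀} A e^{−itH₀} ] ‖ ≤ C for all j ∈ J and all t ∈ ℝ. Let f : ℝ → ℂ be integrable with ∫_ℝ (1+|t|) |f(t)| dt < ∞, and define L(K) := ∫_ℝ f(t) e^{itK} A e^{−itK} dt (a Bochner integral converging in operator norm) for K = H₀ and K = H. Then ‖ L(H) − L(H₀) ‖ ≤ C · ( Σ_{j∈J} |α_j| ) · ∫_ℝ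 |t| |f(t)| dt. In particular, if Σ_{j∈J} |α_j| ≤ κ/n, then ‖L(H) − L(H₀)‖ ≤ (κ C / n) ∫_ℝ |t| |f(t)| dt. -/
set_option maxHeartbeats 1000000

open MeasureTheory

/-- The Heisenberg evolution `e^{itK} A e^{−itK}` of a bounded operator `A`
under a bounded Hamiltonian `K`. -/
noncomputable def heisenberg {ℋ : Type*} [NormedAddCommGroup ℋ]
    [InnerProductSpace ℂ ℋ] [CompleteSpace ℋ]
    (K A : ℋ →L[ℂ] ℋ) (t : ℝ) : ℋ →L[ℂ] ℋ :=
  NormedSpace.exp (((t : ℂ) * Complex.I) • K) * A *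
    NormedSpace.exp ((-((t : ℂ) * Complex.I)) • K)

section Aux

open Complex

private lemma alg1 {E : Type*} [Ring E] (u v a b : E) (h : Commute b u) (h' : Commute b v) :
    b * (u * a * v) - (u * a * v) * b = u * b * a * v + u * a * (v * -b) := by
  have e1 : b * (u * a * v) = u * b * a * v := by
    rw [← mul_assoc, ← mul_assoc, h.eq]
  have e2 : (u * a * v) * b = u * a * (b * v) := by
    rw [mul_assoc, ← h'.eq]
  rw [e1, e2, h'.eq, sub_eq_add_neg, mul_neg, mul_neg]

private lemma alg2 {E : Type*} [Ring E] (u v b b₀ x : E) (h : v * b = b * v) :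
    (u * b * x + u * -(b₀ * x - x * b₀)) * v + u * x * (v * -b)
      = u * (b * x - x * b - (b₀ * x - x * b₀)) * v := by
  have e : v * -b = -(b * v) := by rw [mul_neg, h]
  rw [e]
  noncomm_ring

variable {ℋ : Type*} [NormedAddCommGroup ℋ] [InnerProductSpace ℂ ℋ] [CompleteSpace ℋ]

private lemma expu_mem {K : ℋ →L[ℂ] ℋ} (hK : IsSelfAdjoint K) (t : ℝ) :
    NormedSpace.exp (((t : ℂ) * Complex.I) • K) ∈ unitary (ℋ →L[ℂ] ℋ) := by
  let +nondep : NormedAlgebra ℚ (ℋ →L[ℂ] ℋ) := .restrictScalars ℚ ℂ _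
  refine NormedSpace.exp_mem_unitary_of_mem_skewAdjoint ?_
  rw [skewAdjoint.mem_iff, star_smul, Complex.star_def, map_mul, Complex.conj_ofReal,
    Complex.conj_I, hK.star_eq, mul_neg, neg_smul]

private lemma expu_mem' {K : ℋ →L[ℂ] ℋ} (hK : IsSelfAdjoint K) (t : ℝ) :
    NormedSpace.exp ((-((t : ℂ) * Complex.I)) • K) ∈ unitary (ℋ →L[ℂ] ℋ) := by
  have h : -((t : ℂ) * Complex.I) = ((-t : ℝ) : ℂ) * Complex.I := by push_cast; ring
  rw [h]
  exact expu_mem hK (-t)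

private lemma norm_conj {K : ℋ →L[ℂ] ℋ} (hK : IsSelfAdjoint K) (t : ℝ)
    (B : ℋ →L[ℂ] ℋ) :
    ‖NormedSpace.exp (((t : ℂ) * Complex.I) • K) * B *
      NormedSpace.exp ((-((t : ℂ) * Complex.I)) • K)‖ = ‖B‖ := by
  rw [CStarRing.norm_mul_mem_unitary _ (expu_mem' hK t),
    CStarRing.norm_mem_unitary_mul _ (expu_mem hK t)]

private lemma hasDerivAt_expu (H : ℋ →L[ℂ] ℋ) (s : ℝ) :
    HasDerivAt (fun s : ℝ => NormedSpace.exp (((s : ℂ) * Complex.I) • H))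
      (NormedSpace.exp (((s : ℂ) * Complex.I) • H) * (Complex.I • H)) s := by
  have h := hasDerivAt_exp_smul_const (𝕂 := ℂ) (Complex.I • H) (s : ℂ)
  have h2 := h.scomp s (Complex.ofRealCLM.hasDerivAt)
  simp only [ofRealCLM_apply, ofReal_one, one_smul, Function.comp_def, smul_smul] at h2
  exact h2

private lemma hasDerivAt_expu' (H : ℋ →L[ℂ] ℋ) (s : ℝ) :
    HasDerivAt (fun s : ℝ => NormedSpace.exp ((-((s : ℂ) * Complex.I)) • H))
      (NormedSpace.exp ((-((s : ℂ) * Complex.I)) • H) * (-(Complex.I • H))) s := by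
  have h := hasDerivAt_expu (-H) s
  simp only [smul_neg] at h
  simpa only [neg_smul] using h

private lemma commute_IH_expu (H : ℋ →L[ℂ] ℋ) (c : ℂ) :
    Commute (Complex.I • H) (NormedSpace.exp (c • H)) :=
  (((Commute.refl H).smul_left Complex.I).smul_right c).exp_right

private lemma hasDerivAt_heisenberg (H A : ℋ →L[ℂ] ℋ) (r : ℝ) :
    HasDerivAt (fun r : ℝ => heisenberg H A r)
      ((Complex.I • H) * heisenberg H A r - heisenberg H A r * (Complex.I • H)) r := by
  have h1 := (hasDerivAt_expu H r).mul_const A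
  have h2 := h1.mul (hasDerivAt_expu' H r)
  refine h2.congr_deriv ?_
  symm
  unfold heisenberg
  exact alg1 _ _ _ _ (commute_IH_expu H _) (commute_IH_expu H _)

/-- Duhamel-type bound on the difference of Heisenberg evolutions. -/
private lemma heisenberg_diff_bound (H₀ A W : ℋ →L[ℂ] ℋ)
    (hH₀ : IsSelfAdjoint H₀) (hH : IsSelfAdjoint (H₀ + W)) {c : ℝ}
    (hc : ∀ s : ℝ, ‖W * heisenberg H₀ A s - heisenberg H₀ A s * W‖ ≤ c) (t : ℝ) :
    ‖heisenberg (H₀ + W) A t - heisenberg H₀ A t‖ ≤ c * |t| := by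
  set H := H₀ + W with hHdef
  set U : ℝ → (ℋ →L[ℂ] ℋ) := fun s => NormedSpace.exp (((s : ℂ) * Complex.I) • H) with hU
  set U' : ℝ → (ℋ →L[ℂ] ℋ) := fun s => NormedSpace.exp ((-((s : ℂ) * Complex.I)) • H)
    with hU'
  set M : ℝ → (ℋ →L[ℂ] ℋ) := fun r => heisenberg H₀ A r with hM
  set g : ℝ → (ℋ →L[ℂ] ℋ) := fun s => U s * M (t - s) * U' s with hg
  have hgderiv : ∀ s : ℝ, HasDerivAt g
      (U s * (Complex.I • (W * M (t - s) - M (t - s) * W)) * U' s) s := by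
    intro s
    have hMin : HasDerivAt (fun s : ℝ => M (t - s))
        (-((Complex.I • H₀) * M (t - s) - M (t - s) * (Complex.I • H₀))) s := by
      have hq : HasDerivAt (fun s : ℝ => t - s) (-1 : ℝ) s := by
        simpa using ((hasDerivAt_id s).const_sub t)
      have := (hasDerivAt_heisenberg H₀ A (t - s)).scomp s hq
      simp [neg_smul] at this ⊢
      exact this
    have h1 := (hasDerivAt_expu H s).mul hMin
    have h2 := h1.mul (hasDerivAt_expu' H s)
    have hcom : U' s * (Complex.I • H) = (Complex.I • H) * U' s :=
      (commute_IH_expu H (-((s : ℂ) * Complex.I))).symm.eq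
    have hIW : Complex.I • (W * M (t - s) - M (t - s) * W)
        = (Complex.I • H) * M (t - s) - M (t - s) * (Complex.I • H)
          - ((Complex.I • H₀) * M (t - s) - M (t - s) * (Complex.I • H₀)) := by
      rw [hHdef]
      simp only [smul_add, add_mul, mul_add, smul_sub, smul_mul_assoc, mul_smul_comm]
      abel
    refine h2.congr_deriv ?_
    symm
    rw [hIW]
    exact (alg2 (U s) (U' s) (Complex.I • H) (Complex.I • H₀) (M (t - s)) hcom).symm
  have hbound : ∀ s : ℝ,
      ‖U s * (Complex.I • (W * M (t - s) - M (t - s) * W)) * U' s‖ ≤ c := by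
    intro s
    have h := norm_conj hH s (Complex.I • (W * M (t - s) - M (t - s) * W))
    rw [h, norm_smul, Complex.norm_I, one_mul]
    exact hc (t - s)
  have key : ‖g t - g 0‖ ≤ c * ‖t - 0‖ :=
    Convex.norm_image_sub_le_of_norm_hasDerivWithin_le
      (f := g) (s := Set.univ) (fun x _ => (hgderiv x).hasDerivWithinAt)
      (fun x _ => hbound x) convex_univ (Set.mem_univ 0) (Set.mem_univ t)
  have hM0 : M 0 = A := by
    simp [hM, heisenberg, NormedSpace.exp_zero]
  have hU0 : U 0 = 1 ∧ U' 0 = 1 := by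
    constructor <;> simp [hU, hU', NormedSpace.exp_zero]
  have hgt : g t = heisenberg H A t := by
    rw [hg]; simp only [sub_self, hM0]; rfl
  have hg0 : g 0 = heisenberg H₀ A t := by
    rw [hg]; simp only [hU0.1, hU0.2, sub_zero, one_mul, mul_one]; rfl
  rw [hgt, hg0, sub_zero, Real.norm_eq_abs] at key
  exact key

end Aux

/-- **Locality estimate for filtered jump operators.** If
`W = Σ_j α_j V_j` with `‖[V_j, e^{itH₀} A e^{−itH₀}]‖ ≤ C` uniformly, and
`L(K) = ∫ f(t) e^{itK} A e^{−itK} dt` for an integrable filter `f` with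
`∫ (1+|t|)|f(t)| dt < ∞`, then
`‖L(H₀+W) − L(H₀)‖ ≤ C (Σ_j |α_j|) ∫ |t||f(t)| dt`; in particular if
`Σ_j |α_j| ≤ κ/n` then `‖L(H₀+W) − L(H₀)‖ ≤ (κC/n) ∫ |t||f(t)| dt`. -/
theorem filtered_jump_locality_estimate
    {ℋ : Type*} [NormedAddCommGroup ℋ] [InnerProductSpace ℂ ℋ] [CompleteSpace ℋ]
    (H₀ A : ℋ →L[ℂ] ℋ) (hH₀ : IsSelfAdjoint H₀)
    {J : Type*} [Fintype J] (V : J → (ℋ →L[ℂ] ℋ)) (hV : ∀ j, IsSelfAdjoint (V j))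
    (α : J → ℝ) (W : ℋ →L[ℂ] ℋ) (hW : W = ∑ j, ((α j : ℝ) : ℂ) • V j)
    (C : ℝ) (hC : 0 ≤ C)
    (hcomm : ∀ (j : J) (t : ℝ),
      ‖V j * heisenberg H₀ A t - heisenberg H₀ A t * V j‖ ≤ C)
    (f : ℝ → ℂ) (hf : Integrable f)
    (hf' : Integrable (fun t : ℝ => (1 + |t|) * ‖f t‖))
    (L : (ℋ →L[ℂ] ℋ) → (ℋ →L[ℂ] ℋ))
    (hL : ∀ K : ℋ →L[ℂ] ℋ, L K = ∫ t : ℝ, f t • heisenberg K A t) :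
    ‖L (H₀ + W) - L H₀‖ ≤ C * (∑ j, |α j|) * ∫ t : ℝ, |t| * ‖f t‖ ∧
      ∀ (n : ℕ) (κ : ℝ), 0 < n → (∑ j, |α j|) ≤ κ / n →
        ‖L (H₀ + W) - L H₀‖ ≤ (κ * C / n) * ∫ t : ℝ, |t| * ‖f t‖ := by
  -- self-adjointness of `W` and `H₀ + W`
  have hWsa : IsSelfAdjoint W := by
    rw [hW, IsSelfAdjoint, star_sum]
    exact Finset.sum_congr rfl fun j _ => by
      rw [star_smul, Complex.star_def, Complex.conj_ofReal, (hV j).star_eq]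
  have hHsa : IsSelfAdjoint (H₀ + W) := hH₀.add hWsa
  set c : ℝ := C * ∑ j, |α j| with hc
  -- commutator bound against `W`
  have hWcomm : ∀ s : ℝ, ‖W * heisenberg H₀ A s - heisenberg H₀ A s * W‖ ≤ c := by
    intro s
    set M := heisenberg H₀ A s
    have hexp : W * M - M * W = ∑ j, ((α j : ℝ) : ℂ) • (V j * M - M * V j) := by
      rw [hW, Finset.sum_mul, Finset.mul_sum, ← Finset.sum_sub_distrib]
      exact Finset.sum_congr rfl fun j _ => by
        rw [smul_mul_assoc, mul_smul_comm, smul_sub]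
    rw [hexp]
    calc ‖∑ j, ((α j : ℝ) : ℂ) • (V j * M - M * V j)‖
        ≤ ∑ j, ‖((α j : ℝ) : ℂ) • (V j * M - M * V j)‖ := norm_sum_le _ _
      _ ≤ ∑ j, |α j| * C := by
          refine Finset.sum_le_sum fun j _ => ?_
          rw [norm_smul, Complex.norm_real, Real.norm_eq_abs]
          exact mul_le_mul_of_nonneg_left (hcomm j s) (abs_nonneg _)
      _ = c := by rw [hc, ← Finset.sum_mul, mul_comm]
  -- Duhamel bound
  have hdiff : ∀ t : ℝ, ‖heisenberg (H₀ + W) A t - heisenberg H₀ A t‖ ≤ c * |t| :=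
    heisenberg_diff_bound H₀ A W hH₀ hHsa hWcomm
  -- continuity in `t` of the Heisenberg evolution
  have hcont : ∀ K : ℋ →L[ℂ] ℋ, Continuous (fun t : ℝ => heisenberg K A t) := by
    intro K
    haveI : SecondCountableTopologyEither ℝ (ℋ →L[ℂ] ℋ) :=
      secondCountableTopologyEither_of_left ℝ _
    unfold heisenberg
    have h1 : Continuous (fun t : ℝ => ((t : ℂ) * Complex.I) • K) :=
      (Complex.continuous_ofReal.mul continuous_const).smul continuous_const
    have h2 : Continuous (fun t : ℝ => (-((t : ℂ) * Complex.I)) • K) :=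
      ((Complex.continuous_ofReal.mul continuous_const).neg).smul continuous_const
    let +nondep : NormedAlgebra ℚ (ℋ →L[ℂ] ℋ) := .restrictScalars ℚ ℂ _
    exact ((NormedSpace.exp_continuous.comp h1).mul continuous_const).mul
      (NormedSpace.exp_continuous.comp h2)
  -- integrability of the integrands
  have hint : ∀ K : ℋ →L[ℂ] ℋ, IsSelfAdjoint K →
      Integrable (fun t : ℝ => f t • heisenberg K A t) := by
    intro K hK
    haveI : SecondCountableTopologyEither ℝ (ℋ →L[ℂ] ℋ) :=
      secondCountableTopologyEither_of_left ℝ _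
    refine Integrable.mono' (hf.norm.const_mul ‖A‖)
      (hf.aestronglyMeasurable.smul (hcont K).aestronglyMeasurable)
      (Filter.Eventually.of_forall fun t => ?_)
    rw [norm_smul]
    have h : ‖heisenberg K A t‖ = ‖A‖ := norm_conj hK t A
    rw [h, mul_comm]
  -- integrability of |t| ‖f t‖
  have hIint : Integrable (fun t : ℝ => |t| * ‖f t‖) := by
    refine hf'.mono' (continuous_abs.aestronglyMeasurable.mul hf.norm.aestronglyMeasurable)
      (Filter.Eventually.of_forall fun t => ?_)
    rw [Real.norm_eq_abs, abs_of_nonneg (mul_nonneg (abs_nonneg _) (norm_nonneg _))]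
    have h : (0:ℝ) ≤ ‖f t‖ := norm_nonneg _
    nlinarith [abs_nonneg t]
  have hInonneg : 0 ≤ ∫ t : ℝ, |t| * ‖f t‖ :=
    integral_nonneg fun t => mul_nonneg (abs_nonneg _) (norm_nonneg _)
  -- the main bound
  have main : ‖L (H₀ + W) - L H₀‖ ≤ c * ∫ t : ℝ, |t| * ‖f t‖ := by
    rw [hL, hL, ← integral_sub (hint _ hHsa) (hint _ hH₀)]
    calc ‖∫ t : ℝ, (f t • heisenberg (H₀ + W) A t - f t • heisenberg H₀ A t)‖
        ≤ ∫ t : ℝ, c * (|t| * ‖f t‖) := by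
          refine norm_integral_le_of_norm_le (hIint.const_mul c)
            (Filter.Eventually.of_forall fun t => ?_)
          rw [← smul_sub, norm_smul]
          calc ‖f t‖ * ‖heisenberg (H₀ + W) A t - heisenberg H₀ A t‖
              ≤ ‖f t‖ * (c * |t|) :=
                mul_le_mul_of_nonneg_left (hdiff t) (norm_nonneg _)
            _ = c * (|t| * ‖f t‖) := by ring
      _ = c * ∫ t : ℝ, |t| * ‖f t‖ := integral_const_mul c _
  refine ⟨main, fun n κ hn hκ => ?_⟩
  calc ‖L (H₀ + W) - L H₀‖ ≤ c * ∫ t : ℝ, |t| * ‖f t‖ := main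
    _ ≤ (C * (κ / n)) * ∫ t : ℝ, |t| * ‖f t‖ := by
        refine mul_le_mul_of_nonneg_right ?_ hInonneg
        exact mul_le_mul_of_nonneg_left hκ hC
    _ = (κ * C / n) * ∫ t : ℝ, |t| * ‖f t‖ := by ring
end
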